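/- arXiv:2010.06959 — 7 statements merged into one kernel-verified Lean document; each statement's English description precedes it below -/
import Mathlib

section
/- For every x = (x_1,…,x_N) ∈ (ℝⁿ)^N, the original non-smooth objective equals the minimum of the smooth surrogate plus a constant: f(x) = min { G(x,u) + Σ_{(i,j)∈E} d_{ij}² : u_{ij} ∈ B for every (i,j) ∈ E }, and this minimum is attained. -/
open scoped RealInnerProductSpace BigOperators
open Finset

/-- The smooth surrogate objective `G(x,u)`. -/
noncomputable def objG (n N m : ℕ)
    (E1 : Finset (Fin N × Fin N)) (E2 : Finset (Fin N × Fin m))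
    (a : Fin m → EuclideanSpace ℝ (Fin n))
    (d1 : Fin N × Fin N → ℝ) (d2 : Fin N × Fin m → ℝ)
    (x : Fin N → EuclideanSpace ℝ (Fin n))
    (u1 : Fin N × Fin N → EuclideanSpace ℝ (Fin n))
    (u2 : Fin N × Fin m → EuclideanSpace ℝ (Fin n)) : ℝ :=
  (∑ e ∈ E1, (‖x e.1 - x e.2‖ ^ 2 - 2 * d1 e * ⟪u1 e, x e.1 - x e.2⟫)) +
  ∑ e ∈ E2, (‖x e.1 - a e.2‖ ^ 2 - 2 * d2 e * ⟪u2 e, x e.1 - a e.2⟫)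

/-- The original non-smooth objective `f(x)`. -/
noncomputable def objf (n N m : ℕ)
    (E1 : Finset (Fin N × Fin N)) (E2 : Finset (Fin N × Fin m))
    (a : Fin m → EuclideanSpace ℝ (Fin n))
    (d1 : Fin N × Fin N → ℝ) (d2 : Fin N × Fin m → ℝ)
    (x : Fin N → EuclideanSpace ℝ (Fin n)) : ℝ :=
  (∑ e ∈ E1, (‖x e.1 - x e.2‖ - d1 e) ^ 2) +
  ∑ e ∈ E2, (‖x e.1 - a e.2‖ - d2 e) ^ 2


lemma aux_norm {n : ℕ} (v : EuclideanSpace ℝ (Fin n)) : ‖‖v‖⁻¹ • v‖ ≤ 1 := by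
  rcases eq_or_ne v 0 with h | h
  · simp [h]
  · rw [norm_smul]
    simp [norm_ne_zero_iff.mpr h, abs_of_nonneg (inv_nonneg.mpr (norm_nonneg v))]

lemma aux_inner {n : ℕ} (v : EuclideanSpace ℝ (Fin n)) : ⟪‖v‖⁻¹ • v, v⟫ = ‖v‖ := by
  rcases eq_or_ne v 0 with h | h
  · simp [h]
  · rw [real_inner_smul_left, real_inner_self_eq_norm_sq]
    field_simp [norm_ne_zero_iff.mpr h]

lemma aux_le {n : ℕ} (v u : EuclideanSpace ℝ (Fin n)) {d : ℝ} (hd : 0 ≤ d)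
    (hu : ‖u‖ ≤ 1) : (‖v‖ - d) ^ 2 ≤ ‖v‖ ^ 2 - 2 * d * ⟪u, v⟫ + d ^ 2 := by
  have h1 : ⟪u, v⟫ ≤ ‖u‖ * ‖v‖ := real_inner_le_norm u v
  have h2 : ‖u‖ * ‖v‖ ≤ 1 * ‖v‖ := mul_le_mul_of_nonneg_right hu (norm_nonneg v)
  have h3 : ⟪u, v⟫ ≤ ‖v‖ := by linarith
  nlinarith [mul_le_mul_of_nonneg_left h3 hd]

/-- For every `x`, `f(x)` is the minimum (attained) of
`G(x,u) + ∑_{(i,j)∈E} d_{ij}²` over all `u` with `u_{ij}` in the closed unit ball. -/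
theorem stmt0 (n N m : ℕ) (hn : 1 ≤ n) (hN : 1 ≤ N)
    (E1 : Finset (Fin N × Fin N)) (hE1 : ∀ e ∈ E1, e.1 < e.2)
    (E2 : Finset (Fin N × Fin m))
    (a : Fin m → EuclideanSpace ℝ (Fin n))
    (d1 : Fin N × Fin N → ℝ) (d2 : Fin N × Fin m → ℝ)
    (hd1 : ∀ e ∈ E1, 0 ≤ d1 e) (hd2 : ∀ e ∈ E2, 0 ≤ d2 e)
    (x : Fin N → EuclideanSpace ℝ (Fin n)) :
    IsLeast
      { c : ℝ |
        ∃ (u1 : Fin N × Fin N → EuclideanSpace ℝ (Fin n))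
          (u2 : Fin N × Fin m → EuclideanSpace ℝ (Fin n)),
          (∀ e ∈ E1, ‖u1 e‖ ≤ 1) ∧ (∀ e ∈ E2, ‖u2 e‖ ≤ 1) ∧
          c = objG n N m E1 E2 a d1 d2 x u1 u2 +
                ((∑ e ∈ E1, d1 e ^ 2) + ∑ e ∈ E2, d2 e ^ 2) }
      (objf n N m E1 E2 a d1 d2 x) := by
  constructor
  · refine ⟨fun e => ‖x e.1 - x e.2‖⁻¹ • (x e.1 - x e.2),
      fun e => ‖x e.1 - a e.2‖⁻¹ • (x e.1 - a e.2),
      fun e _ => aux_norm _, fun e _ => aux_norm _, ?_⟩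
    unfold objf objG
    have h1 : ∀ e ∈ E1, (‖x e.1 - x e.2‖ - d1 e) ^ 2 =
        (‖x e.1 - x e.2‖ ^ 2 -
          2 * d1 e * ⟪‖x e.1 - x e.2‖⁻¹ • (x e.1 - x e.2), x e.1 - x e.2⟫) + d1 e ^ 2 := by
      intro e _
      rw [aux_inner]; ring
    have h2 : ∀ e ∈ E2, (‖x e.1 - a e.2‖ - d2 e) ^ 2 =
        (‖x e.1 - a e.2‖ ^ 2 -
          2 * d2 e * ⟪‖x e.1 - a e.2‖⁻¹ • (x e.1 - a e.2), x e.1 - a e.2⟫) + d2 e ^ 2 := by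
      intro e _
      rw [aux_inner]; ring
    rw [Finset.sum_congr rfl h1, Finset.sum_congr rfl h2,
      Finset.sum_add_distrib, Finset.sum_add_distrib]
    ring
  · rintro c ⟨u1, u2, hu1, hu2, rfl⟩
    unfold objf objG
    have hA := Finset.sum_le_sum (fun e he => aux_le (x e.1 - x e.2) (u1 e) (hd1 e he) (hu1 e he))
    have hB := Finset.sum_le_sum (fun e he => aux_le (x e.1 - a e.2) (u2 e) (hd2 e he) (hu2 e he))
    rw [Finset.sum_add_distrib] at hA hB
    linarith
end

section
/- (Proposition 1.) Assume d_{ij} > 0 for every edge. Let x* ∈ (ℝⁿ)^N and let u* assign to each edge (i,j) ∈ E a vector u*_{ij} ∈ B, with the convention u*_{ji} = −u*_{ij} for (i,j) ∈ E1, and set v*_{ij} = x*_i − x*_j for (i,j) ∈ E1 and v*_{ij} = x*_i − a_j for (i,j) ∈ E2. Suppose (x*,u*) is a critical point of the reformulated problem, i.e.: (i) for every edge (i,j) ∈ E and every w ∈ B, ⟨2 d_{ij} v*_{ij}, w − u*_{ij}⟩ ≤ 0 (the normal-cone conditions (8)–(9)); and (ii) for every i ∈ V, Σ_{j∈N(i)∩V}(x*_i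 − x*_j − d_{ij} u*_{ij}) + Σ_{j∈N(i)∩A}(x*_i − a_j − d_{ij} u*_{ij}) = 0 (stationarity condition (7)). Then x* is a critical point of the original objective f; concretely, for every edge (i,j) ∈ E one has ⟨u*_{ij}, v*_{ij}⟩ = ‖v*_{ij}‖ with ‖u*_{ij}‖ ≤ 1, so each u*_{ij} is a subgradient of the Euclidean norm at v*_{ij}, and the equations (ii) witness that 0 belongs to the subdifferential of f at x*. -/
open scoped RealInnerProductSpace BigOperators
open Finset

lemma key_sub {n : ℕ} (d : ℝ) (hd : 0 < d) (v u : EuclideanSpace ℝ (Fin n))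
    (hu : ‖u‖ ≤ 1)
    (h : ∀ w : EuclideanSpace ℝ (Fin n), ‖w‖ ≤ 1 → ⟪(2 * d) • v, w - u⟫ ≤ 0) :
    ⟪u, v⟫ = ‖v‖ := by
  rcases eq_or_ne v 0 with hv | hv
  · simp [hv]
  · have hvpos : (0 : ℝ) < ‖v‖ := norm_pos_iff.mpr hv
    have hw : ‖(‖v‖⁻¹ • v : EuclideanSpace ℝ (Fin n))‖ ≤ 1 := by
      rw [norm_smul, Real.norm_eq_abs, abs_inv, abs_of_pos hvpos,
        inv_mul_cancel₀ hvpos.ne']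
    have h1 := h _ hw
    rw [inner_smul_left, inner_sub_right, inner_smul_right, real_inner_self_eq_norm_sq] at h1
    simp only [starRingEnd_apply, star_trivial] at h1
    have h2 : ‖v‖⁻¹ * ‖v‖ ^ 2 - ⟪v, u⟫ ≤ 0 := by
      have h2d : (0 : ℝ) < 2 * d := by linarith
      nlinarith
    have h3 : ‖v‖ ≤ ⟪v, u⟫ := by
      have : ‖v‖⁻¹ * ‖v‖ ^ 2 = ‖v‖ := by field_simp
      linarith [this ▸ h2]
    have h4 : ⟪v, u⟫ ≤ ‖v‖ := by
      calc ⟪v, u⟫ ≤ ‖v‖ * ‖u‖ := real_inner_le_norm v u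
        _ ≤ ‖v‖ * 1 := by nlinarith
        _ = ‖v‖ := mul_one _
    rw [real_inner_comm]
    linarith

/-- Proposition 1: if `(x*, u*)` is a critical point of the reformulated
problem (normal-cone conditions for the `u`-block and stationarity in the
`x`-block), then `x*` is a critical point of the original objective `f`;
concretely, each `u*_{ij}` is a subgradient of the Euclidean norm at
`v*_{ij}` (i.e. `⟪u*_{ij}, v*_{ij}⟫ = ‖v*_{ij}‖` with `‖u*_{ij}‖ ≤ 1`), and
the stationarity equations witness `0 ∈ ∂f(x*)`.
The convention `u*_{ji} = −u*_{ij}` for sensor–sensor edges is encoded by the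
`+ d_{ij} • u*_{ij}` sign in the sums over edges whose second endpoint is `i`. -/
theorem stmt2 (n N m : ℕ) (hn : 1 ≤ n) (hN : 1 ≤ N)
    (E1 : Finset (Fin N × Fin N)) (hE1 : ∀ e ∈ E1, e.1 < e.2)
    (E2 : Finset (Fin N × Fin m))
    (a : Fin m → EuclideanSpace ℝ (Fin n))
    (d1 : Fin N × Fin N → ℝ) (d2 : Fin N × Fin m → ℝ)
    (hd1 : ∀ e ∈ E1, 0 < d1 e) (hd2 : ∀ e ∈ E2, 0 < d2 e)
    (x : Fin N → EuclideanSpace ℝ (Fin n))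
    (u1 : Fin N × Fin N → EuclideanSpace ℝ (Fin n))
    (u2 : Fin N × Fin m → EuclideanSpace ℝ (Fin n))
    (hball1 : ∀ e ∈ E1, ‖u1 e‖ ≤ 1) (hball2 : ∀ e ∈ E2, ‖u2 e‖ ≤ 1)
    -- (i) normal-cone conditions (8)–(9):
    (hNC1 : ∀ e ∈ E1, ∀ w : EuclideanSpace ℝ (Fin n), ‖w‖ ≤ 1 →
      ⟪(2 * d1 e) • (x e.1 - x e.2), w - u1 e⟫ ≤ 0)
    (hNC2 : ∀ e ∈ E2, ∀ w : EuclideanSpace ℝ (Fin n), ‖w‖ ≤ 1 →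
      ⟪(2 * d2 e) • (x e.1 - a e.2), w - u2 e⟫ ≤ 0)
    -- (ii) stationarity condition (7), for every sensor `i`:
    (hstat : ∀ i : Fin N,
      (∑ e ∈ E1.filter (fun e => e.1 = i), (x i - x e.2 - d1 e • u1 e)) +
      (∑ e ∈ E1.filter (fun e => e.2 = i), (x i - x e.1 + d1 e • u1 e)) +
      (∑ e ∈ E2.filter (fun e => e.1 = i), (x i - a e.2 - d2 e • u2 e)) = 0) :
    -- conclusion: each `u*_{ij}` is a subgradient of `‖·‖` at `v*_{ij}`,
    -- and together with the stationarity equations this witnesses that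
    -- `0` belongs to the subdifferential of `f` at `x*`.
    (∀ e ∈ E1, ‖u1 e‖ ≤ 1 ∧ ⟪u1 e, x e.1 - x e.2⟫ = ‖x e.1 - x e.2‖) ∧
    (∀ e ∈ E2, ‖u2 e‖ ≤ 1 ∧ ⟪u2 e, x e.1 - a e.2⟫ = ‖x e.1 - a e.2‖) ∧
    (∀ i : Fin N,
      (∑ e ∈ E1.filter (fun e => e.1 = i), (x i - x e.2 - d1 e • u1 e)) +
      (∑ e ∈ E1.filter (fun e => e.2 = i), (x i - x e.1 + d1 e • u1 e)) +
      (∑ e ∈ E2.filter (fun e => e.1 = i), (x i - a e.2 - d2 e • u2 e)) = 0) := by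
  refine ⟨fun e he => ⟨hball1 e he, key_sub (d1 e) (hd1 e he) _ _ (hball1 e he) (hNC1 e he)⟩,
    fun e he => ⟨hball2 e he, key_sub (d2 e) (hd2 e he) _ _ (hball2 e he) (hNC2 e he)⟩, hstat⟩
end

section
/- (Proposition 2(ii).) Under Assumption 1, for every fixed u (assigning u_{ij} ∈ ℝⁿ to each edge), the function x ↦ G(x,u) on (ℝⁿ)^N is strongly convex, i.e., there exists σ > 0 such that x ↦ G(x,u) − (σ/2)‖x‖² is convex. -/
open scoped RealInnerProductSpace BigOperators
open Finset

/-- The relation of the network graph on vertices `V ∪ A = Fin N ⊕ Fin m`. -/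
def netRel (N m : ℕ) (E1 : Finset (Fin N × Fin N)) (E2 : Finset (Fin N × Fin m)) :
    (Fin N ⊕ Fin m) → (Fin N ⊕ Fin m) → Prop := fun p q =>
  match p, q with
  | Sum.inl i, Sum.inl j => (i, j) ∈ E1
  | Sum.inl i, Sum.inr j => (i, j) ∈ E2
  | _, _ => False

lemma mix_norm_sq {F : Type*} [NormedAddCommGroup F] [InnerProductSpace ℝ F]
    (v w : F) (t s : ℝ) (h : t + s = 1) :
    ‖t • v + s • w‖ ^ 2 = t * ‖v‖ ^ 2 + s * ‖w‖ ^ 2 - t * s * ‖v - w‖ ^ 2 := by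
  have h1 : ∀ x : F, ‖x‖ ^ 2 = ⟪x, x⟫ := fun x => (real_inner_self_eq_norm_sq x).symm
  rw [h1, h1, h1, h1]
  simp only [inner_add_add_self, inner_sub_sub_self, real_inner_smul_left,
    real_inner_smul_right, real_inner_comm v w]
  linear_combination (t * (inner ℝ v v : ℝ) + s * (inner ℝ w w : ℝ)) * h

lemma mix_term {F : Type*} [NormedAddCommGroup F] [InnerProductSpace ℝ F]
    (v w u' : F) (d t s : ℝ) (h : t + s = 1) :
    ‖t • v + s • w‖ ^ 2 - 2 * d * ⟪u', t • v + s • w⟫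
      = t * (‖v‖ ^ 2 - 2 * d * ⟪u', v⟫) + s * (‖w‖ ^ 2 - 2 * d * ⟪u', w⟫)
        - t * s * ‖v - w‖ ^ 2 := by
  rw [mix_norm_sq v w t s h]
  simp only [inner_add_right, real_inner_smul_right]
  ring


noncomputable def Qform (n N m : ℕ) (E1 : Finset (Fin N × Fin N))
    (E2 : Finset (Fin N × Fin m)) (z : Fin N → EuclideanSpace ℝ (Fin n)) : ℝ :=
  (∑ e ∈ E1, ‖z e.1 - z e.2‖ ^ 2) + ∑ e ∈ E2, ‖z e.1‖ ^ 2

lemma Qform_nonneg (n N m : ℕ) (E1 : Finset (Fin N × Fin N))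
    (E2 : Finset (Fin N × Fin m)) (z : Fin N → EuclideanSpace ℝ (Fin n)) :
    0 ≤ Qform n N m E1 E2 z := by
  unfold Qform
  positivity

lemma Qform_smul (n N m : ℕ) (E1 : Finset (Fin N × Fin N))
    (E2 : Finset (Fin N × Fin m)) (c : ℝ) (z : Fin N → EuclideanSpace ℝ (Fin n)) :
    Qform n N m E1 E2 (c • z) = c ^ 2 * Qform n N m E1 E2 z := by
  unfold Qform
  simp only [Pi.smul_apply, ← smul_sub, norm_smul, mul_pow, Real.norm_eq_abs, sq_abs]
  rw [← Finset.mul_sum, ← Finset.mul_sum, mul_add]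

lemma Qform_continuous (n N m : ℕ) (E1 : Finset (Fin N × Fin N))
    (E2 : Finset (Fin N × Fin m)) :
    Continuous (Qform n N m E1 E2) := by
  unfold Qform
  apply Continuous.add <;> apply continuous_finset_sum <;> intro e _
  · exact (((continuous_apply e.1).sub (continuous_apply e.2)).norm.pow 2)
  · exact ((continuous_apply e.1).norm.pow 2)


lemma Qform_eq_zero (n N m : ℕ) (E1 : Finset (Fin N × Fin N))
    (E2 : Finset (Fin N × Fin m))
    (hconn : (SimpleGraph.fromRel (netRel N m E1 E2)).Connected) (hm : 1 ≤ m)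
    (z : Fin N → EuclideanSpace ℝ (Fin n)) (hQ : Qform n N m E1 E2 z = 0) :
    z = 0 := by
  have hs1 : (0:ℝ) ≤ ∑ e ∈ E1, ‖z e.1 - z e.2‖ ^ 2 := by positivity
  have hs2 : (0:ℝ) ≤ ∑ e ∈ E2, ‖z e.1‖ ^ 2 := by positivity
  unfold Qform at hQ
  have h1 : ∑ e ∈ E1, ‖z e.1 - z e.2‖ ^ 2 = 0 := by linarith
  have h2 : ∑ e ∈ E2, ‖z e.1‖ ^ 2 = 0 := by linarith
  rw [Finset.sum_eq_zero_iff_of_nonneg (fun e _ => by positivity)] at h1 h2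
  have hz1 : ∀ e ∈ E1, z e.1 = z e.2 := by
    intro e he
    have := h1 e he
    have : ‖z e.1 - z e.2‖ = 0 := by
      nlinarith [norm_nonneg (z e.1 - z e.2)]
    rwa [norm_eq_zero, sub_eq_zero] at this
  have hz2 : ∀ e ∈ E2, z e.1 = 0 := by
    intro e he
    have := h2 e he
    have : ‖z e.1‖ = 0 := by nlinarith [norm_nonneg (z e.1)]
    rwa [norm_eq_zero] at this
  -- f constant along edges
  set G := SimpleGraph.fromRel (netRel N m E1 E2) with hG
  set f : (Fin N ⊕ Fin m) → EuclideanSpace ℝ (Fin n) := Sum.elim z 0 with hf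
  have hadj : ∀ p q, G.Adj p q → f p = f q := by
    rintro (i | i) (j | j) ⟨hne, hrel⟩ <;>
      simp only [netRel] at hrel <;> simp only [hf, Sum.elim_inl, Sum.elim_inr]
    · rcases hrel with h | h
      · exact hz1 (i, j) h
      · exact (hz1 (j, i) h).symm
    · rcases hrel with h | h
      · exact hz2 (i, j) h
      · exact h.elim
    · rcases hrel with h | h
      · exact h.elim
      · exact (hz2 (j, i) h).symm
    · rcases hrel with h | h <;> exact h.elim
  have hwalk : ∀ p q, (w : G.Walk p q) → f p = f q := by
    intro p q w
    induction w with
    | nil => rfl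
    | cons h' w ih => exact (hadj _ _ h').trans ih
  funext i
  obtain ⟨w⟩ := hconn.preconnected (Sum.inl i) (Sum.inr ⟨0, hm⟩)
  have := hwalk _ _ w
  simpa [hf] using this

lemma exists_sigma (n N m : ℕ) (hn : 1 ≤ n) (hN : 1 ≤ N)
    (E1 : Finset (Fin N × Fin N)) (E2 : Finset (Fin N × Fin m))
    (hconn : (SimpleGraph.fromRel (netRel N m E1 E2)).Connected) (hm : 1 ≤ m) :
    ∃ σ : ℝ, 0 < σ ∧ ∀ z : Fin N → EuclideanSpace ℝ (Fin n),
      σ * ∑ i, ‖z i‖ ^ 2 ≤ Qform n N m E1 E2 z := by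
  haveI : Nontrivial (Fin N → EuclideanSpace ℝ (Fin n)) := by
    refine ⟨⟨fun _ => EuclideanSpace.single (⟨0, hn⟩ : Fin n) (1 : ℝ), 0, ?_⟩⟩
    intro h
    have h2 := congrFun h ⟨0, hN⟩
    have h3 : ‖EuclideanSpace.single (⟨0, hn⟩ : Fin n) (1 : ℝ)‖ = 1 := by
      simp [EuclideanSpace.norm_single]
    rw [h2] at h3
    simp at h3
  have hQcont := Qform_continuous n N m E1 E2
  have hsph : (Metric.sphere (0 : Fin N → EuclideanSpace ℝ (Fin n)) 1).Nonempty :=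
    NormedSpace.sphere_nonempty.mpr zero_le_one
  obtain ⟨z0, hz0, hmin⟩ := (isCompact_sphere (0 : Fin N → EuclideanSpace ℝ (Fin n)) 1).exists_isMinOn hsph hQcont.continuousOn
  set c := Qform n N m E1 E2 z0 with hc
  have hz0norm : ‖z0‖ = 1 := by simpa using hz0
  have hcpos : 0 < c := by
    rcases lt_or_eq_of_le (Qform_nonneg n N m E1 E2 z0) with h | h
    · exact h
    · exfalso
      have := Qform_eq_zero n N m E1 E2 hconn hm z0 h.symm
      rw [this] at hz0norm
      simp at hz0norm
  refine ⟨c / N, div_pos hcpos (by exact_mod_cast Nat.pos_of_ne_zero (by omega)), ?_⟩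
  intro z
  rcases eq_or_ne z 0 with rfl | hz
  · simp [Qform_nonneg]
  · have hr : 0 < ‖z‖ := norm_pos_iff.mpr hz
    have hw : ‖(‖z‖⁻¹ • z)‖ = 1 := by
      rw [norm_smul, Real.norm_eq_abs, abs_inv, abs_of_pos hr, inv_mul_cancel₀ hr.ne']
    have hQw : c ≤ Qform n N m E1 E2 (‖z‖⁻¹ • z) :=
      hmin (by simpa using hw)
    have hhom : Qform n N m E1 E2 z = ‖z‖ ^ 2 * Qform n N m E1 E2 (‖z‖⁻¹ • z) := by
      rw [Qform_smul]
      field_simp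
    have hbound : ∑ i, ‖z i‖ ^ 2 ≤ N * ‖z‖ ^ 2 := by
      calc ∑ i, ‖z i‖ ^ 2 ≤ ∑ _i : Fin N, ‖z‖ ^ 2 := by
            refine Finset.sum_le_sum fun i _ => ?_
            have := norm_le_pi_norm z i
            nlinarith [norm_nonneg (z i)]
          _ = N * ‖z‖ ^ 2 := by simp [Finset.sum_const, mul_comm]
    have h1 : c * ‖z‖ ^ 2 ≤ Qform n N m E1 E2 z := by
      rw [hhom]; nlinarith [sq_nonneg ‖z‖]
    have hN0 : (0:ℝ) < N := by exact_mod_cast Nat.pos_of_ne_zero (by omega)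
    calc c / N * ∑ i, ‖z i‖ ^ 2 ≤ c / N * (N * ‖z‖ ^ 2) := by
          apply mul_le_mul_of_nonneg_left hbound (le_of_lt (div_pos hcpos hN0))
        _ = c * ‖z‖ ^ 2 := by field_simp
        _ ≤ _ := h1


/-- Proposition 2(ii): under Assumption 1, for every fixed `u` the function
`x ↦ G(x,u)` is strongly convex: there is `σ > 0` such that
`x ↦ G(x,u) − (σ/2)‖x‖²` is convex (`‖x‖² = ∑ i, ‖x_i‖²` is the squared
Euclidean norm of the concatenated vector). -/
theorem stmt6 (n N m : ℕ) (hn : 1 ≤ n) (hN : 1 ≤ N)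
    (E1 : Finset (Fin N × Fin N)) (hE1 : ∀ e ∈ E1, e.1 < e.2)
    (E2 : Finset (Fin N × Fin m))
    (a : Fin m → EuclideanSpace ℝ (Fin n))
    (d1 : Fin N × Fin N → ℝ) (d2 : Fin N × Fin m → ℝ)
    (hd1 : ∀ e ∈ E1, 0 ≤ d1 e) (hd2 : ∀ e ∈ E2, 0 ≤ d2 e)
    (hconn : (SimpleGraph.fromRel (netRel N m E1 E2)).Connected)
    (hm : 1 ≤ m)
    (u1 : Fin N × Fin N → EuclideanSpace ℝ (Fin n))
    (u2 : Fin N × Fin m → EuclideanSpace ℝ (Fin n)) :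
    ∃ σ : ℝ, 0 < σ ∧
      ConvexOn ℝ Set.univ
        (fun x : Fin N → EuclideanSpace ℝ (Fin n) =>
          objG n N m E1 E2 a d1 d2 x u1 u2 - σ / 2 * ∑ i, ‖x i‖ ^ 2) := by
  obtain ⟨σ, hσ, hQ⟩ := exists_sigma n N m hn hN E1 E2 hconn hm
  refine ⟨σ, hσ, convex_univ, ?_⟩
  intro x _ y _ t s ht hs hts
  set z : Fin N → EuclideanSpace ℝ (Fin n) := fun i => x i - y i with hzdef
  have hGkey : objG n N m E1 E2 a d1 d2 (t • x + s • y) u1 u2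
      = t * objG n N m E1 E2 a d1 d2 x u1 u2 + s * objG n N m E1 E2 a d1 d2 y u1 u2
        - t * s * Qform n N m E1 E2 z := by
    unfold objG Qform
    have e1 : ∑ e ∈ E1, (‖(t • x + s • y) e.1 - (t • x + s • y) e.2‖ ^ 2
          - 2 * d1 e * ⟪u1 e, (t • x + s • y) e.1 - (t • x + s • y) e.2⟫)
        = ∑ e ∈ E1, (t * (‖x e.1 - x e.2‖ ^ 2 - 2 * d1 e * ⟪u1 e, x e.1 - x e.2⟫)
            + s * (‖y e.1 - y e.2‖ ^ 2 - 2 * d1 e * ⟪u1 e, y e.1 - y e.2⟫)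
            - t * s * ‖z e.1 - z e.2‖ ^ 2) := by
      refine Finset.sum_congr rfl fun e _ => ?_
      have hv : (t • x + s • y) e.1 - (t • x + s • y) e.2
          = t • (x e.1 - x e.2) + s • (y e.1 - y e.2) := by
        simp only [Pi.add_apply, Pi.smul_apply, smul_sub]; abel
      have hzv : z e.1 - z e.2 = (x e.1 - x e.2) - (y e.1 - y e.2) := by
        simp only [hzdef]; abel
      rw [hv, mix_term _ _ _ _ t s hts, hzv]
    have e2 : ∑ e ∈ E2, (‖(t • x + s • y) e.1 - a e.2‖ ^ 2
          - 2 * d2 e * ⟪u2 e, (t • x + s • y) e.1 - a e.2⟫)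
        = ∑ e ∈ E2, (t * (‖x e.1 - a e.2‖ ^ 2 - 2 * d2 e * ⟪u2 e, x e.1 - a e.2⟫)
            + s * (‖y e.1 - a e.2‖ ^ 2 - 2 * d2 e * ⟪u2 e, y e.1 - a e.2⟫)
            - t * s * ‖z e.1‖ ^ 2) := by
      refine Finset.sum_congr rfl fun e _ => ?_
      have hv : (t • x + s • y) e.1 - a e.2
          = t • (x e.1 - a e.2) + s • (y e.1 - a e.2) := by
        have ha : a e.2 = t • a e.2 + s • a e.2 := by
          rw [← add_smul, hts, one_smul]
        simp only [Pi.add_apply, Pi.smul_apply, smul_sub]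
        conv_lhs => rw [ha]
        abel
      have hzv : z e.1 = (x e.1 - a e.2) - (y e.1 - a e.2) := by
        simp only [hzdef]; abel
      rw [hv, mix_term _ _ _ _ t s hts, hzv]
    rw [e1, e2]
    simp only [Finset.sum_sub_distrib, Finset.sum_add_distrib, ← Finset.mul_sum]
    ring
  have hsum : ∑ i, ‖(t • x + s • y) i‖ ^ 2
      = t * ∑ i, ‖x i‖ ^ 2 + s * ∑ i, ‖y i‖ ^ 2 - t * s * ∑ i, ‖z i‖ ^ 2 := by
    have e3 : ∑ i, ‖(t • x + s • y) i‖ ^ 2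
        = ∑ i, (t * ‖x i‖ ^ 2 + s * ‖y i‖ ^ 2 - t * s * ‖z i‖ ^ 2) := by
      refine Finset.sum_congr rfl fun i _ => ?_
      have : (t • x + s • y) i = t • x i + s • y i := rfl
      rw [this, mix_norm_sq _ _ t s hts]
    rw [e3]
    simp only [Finset.sum_sub_distrib, Finset.sum_add_distrib, ← Finset.mul_sum]
  simp only [smul_eq_mul]
  rw [hGkey, hsum]
  have h1 := hQ z
  have h2 : (0:ℝ) ≤ ∑ i, ‖z i‖ ^ 2 := by positivity
  nlinarith [mul_le_mul_of_nonneg_left h1 (mul_nonneg ht hs), mul_nonneg (mul_nonneg (mul_nonneg hσ.le ht) hs) h2]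
end

section
/- (Proposition 2(iii).) Under Assumption 1, the constrained surrogate is coercive: for every sequence of pairs (x^k, u^k) with u^k_{ij} ∈ B for every edge and every k, if ‖(x^k,u^k)‖ → ∞ then G(x^k,u^k) → ∞. -/
open scoped RealInnerProductSpace BigOperators
open Finset Filter

section Aux

variable {n N m : ℕ}
variable (E1 : Finset (Fin N × Fin N)) (E2 : Finset (Fin N × Fin m))
variable (a : Fin m → EuclideanSpace ℝ (Fin n))

/-- The quadratic part of the surrogate. -/
noncomputable def Fq (x : Fin N → EuclideanSpace ℝ (Fin n)) : ℝ :=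
  (∑ e ∈ E1, ‖x e.1 - x e.2‖ ^ 2) + ∑ e ∈ E2, ‖x e.1 - a e.2‖ ^ 2

lemma Fq_nonneg (x : Fin N → EuclideanSpace ℝ (Fin n)) : 0 ≤ Fq E1 E2 a x := by
  apply add_nonneg <;> exact Finset.sum_nonneg fun e _ => by positivity

/-- Positions of all vertices. -/
def posv (x : Fin N → EuclideanSpace ℝ (Fin n)) : (Fin N ⊕ Fin m) → EuclideanSpace ℝ (Fin n) :=
  Sum.elim x a

lemma edge_bound (x : Fin N → EuclideanSpace ℝ (Fin n)) {v w : Fin N ⊕ Fin m}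
    (h : (SimpleGraph.fromRel (netRel N m E1 E2)).Adj v w) :
    ‖posv a x v - posv a x w‖ ^ 2 ≤ Fq E1 E2 a x := by
  rw [SimpleGraph.fromRel_adj] at h
  have key : ∀ p q : Fin N ⊕ Fin m, netRel N m E1 E2 p q →
      ‖posv a x p - posv a x q‖ ^ 2 ≤ Fq E1 E2 a x := by
    rintro (i | i) (j | j) hpq
    · have hmem : (i, j) ∈ E1 := hpq
      have hle : ‖x i - x j‖ ^ 2 ≤ ∑ e ∈ E1, ‖x e.1 - x e.2‖ ^ 2 := by
        have h := Finset.single_le_sum (N := ℝ)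
          (f := fun e : Fin N × Fin N => ‖x e.1 - x e.2‖ ^ 2)
          (fun e _ => by positivity) hmem
        simpa using h
      have h2 : (0:ℝ) ≤ ∑ e ∈ E2, ‖x e.1 - a e.2‖ ^ 2 :=
        Finset.sum_nonneg fun e _ => by positivity
      show ‖x i - x j‖ ^ 2 ≤ Fq E1 E2 a x
      unfold Fq; linarith
    · have hmem : (i, j) ∈ E2 := hpq
      have hle : ‖x i - a j‖ ^ 2 ≤ ∑ e ∈ E2, ‖x e.1 - a e.2‖ ^ 2 := by
        have h := Finset.single_le_sum (N := ℝ)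
          (f := fun e : Fin N × Fin m => ‖x e.1 - a e.2‖ ^ 2)
          (fun e _ => by positivity) hmem
        simpa using h
      have h1 : (0:ℝ) ≤ ∑ e ∈ E1, ‖x e.1 - x e.2‖ ^ 2 :=
        Finset.sum_nonneg fun e _ => by positivity
      show ‖x i - a j‖ ^ 2 ≤ Fq E1 E2 a x
      unfold Fq; linarith
    · exact absurd hpq (by simp [netRel])
    · exact absurd hpq (by simp [netRel])
  rcases h.2 with h' | h'
  · exact key _ _ h'
  · rw [norm_sub_rev]; exact key _ _ h'

lemma walk_bound (x : Fin N → EuclideanSpace ℝ (Fin n)) {v w : Fin N ⊕ Fin m}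
    (p : (SimpleGraph.fromRel (netRel N m E1 E2)).Walk v w) :
    ‖posv a x v - posv a x w‖ ≤ p.length * Real.sqrt (Fq E1 E2 a x) := by
  induction p with
  | nil => simp
  | cons h p ih =>
      rename_i v v' w
      have hvv' : ‖posv a x v - posv a x v'‖ ≤ Real.sqrt (Fq E1 E2 a x) := by
        have hb := edge_bound E1 E2 a x h
        have hnn : (0:ℝ) ≤ ‖posv a x v - posv a x v'‖ := norm_nonneg _
        nlinarith [Real.sq_sqrt (Fq_nonneg E1 E2 a x), Real.sqrt_nonneg (Fq E1 E2 a x)]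
      calc ‖posv a x v - posv a x w‖
          ≤ ‖posv a x v - posv a x v'‖ + ‖posv a x v' - posv a x w‖ :=
            norm_sub_le_norm_sub_add_norm_sub _ _ _
        _ ≤ Real.sqrt (Fq E1 E2 a x) + p.length * Real.sqrt (Fq E1 E2 a x) := add_le_add hvv' ih
        _ = (↑p.length + 1) * Real.sqrt (Fq E1 E2 a x) := by ring
        _ = _ := by rw [SimpleGraph.Walk.length_cons]; push_cast; ring

lemma sum_sq_le (hconn : (SimpleGraph.fromRel (netRel N m E1 E2)).Connected) (hm : 1 ≤ m) :
    ∃ c1 c2 : ℝ, 0 < c2 ∧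
      ∀ x : Fin N → EuclideanSpace ℝ (Fin n), ∑ i, ‖x i‖ ^ 2 ≤ c1 + c2 * Fq E1 E2 a x := by
  classical
  set j0 : Fin m := ⟨0, hm⟩
  have hreach : ∀ i : Fin N,
      Nonempty ((SimpleGraph.fromRel (netRel N m E1 E2)).Walk (Sum.inl i) (Sum.inr j0)) :=
    fun i => hconn.preconnected (Sum.inl i) (Sum.inr j0)
  have p : ∀ i : Fin N, (SimpleGraph.fromRel (netRel N m E1 E2)).Walk (Sum.inl i) (Sum.inr j0) := fun i => (hreach i).some
  set L : Fin N → ℕ := fun i => (p i).length with hL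
  refine ⟨∑ _i : Fin N, 2 * ‖a j0‖ ^ 2, (∑ i : Fin N, 2 * (L i : ℝ) ^ 2) + 1, ?_, ?_⟩
  · have : (0:ℝ) ≤ ∑ i : Fin N, 2 * (L i : ℝ) ^ 2 :=
      Finset.sum_nonneg fun i _ => by positivity
    linarith
  · intro x
    have hFnn := Fq_nonneg E1 E2 a x
    have hsq := Real.sq_sqrt hFnn
    have hsnn := Real.sqrt_nonneg (Fq E1 E2 a x)
    have key : ∀ i : Fin N, ‖x i‖ ^ 2 ≤ 2 * ‖a j0‖ ^ 2 + 2 * (L i : ℝ) ^ 2 * Fq E1 E2 a x := by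
      intro i
      have hw := walk_bound E1 E2 a x (p i)
      have h1 : ‖x i - a j0‖ ≤ (L i : ℝ) * Real.sqrt (Fq E1 E2 a x) := by
        simpa [posv, hL] using hw
      have h2 : ‖x i‖ ≤ ‖x i - a j0‖ + ‖a j0‖ := by
        have := norm_sub_le (x i - a j0) (-(a j0))
        simpa [sub_neg_eq_add, sub_add_cancel] using norm_add_le (x i - a j0) (a j0)
      have hnn1 : (0:ℝ) ≤ ‖x i - a j0‖ := norm_nonneg _
      have hnn2 : (0:ℝ) ≤ ‖a j0‖ := norm_nonneg _
      have hnn3 : (0:ℝ) ≤ ‖x i‖ := norm_nonneg _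
      nlinarith [sq_nonneg (‖x i - a j0‖ - ‖a j0‖), sq_nonneg ((L i : ℝ) * Real.sqrt (Fq E1 E2 a x) - ‖x i - a j0‖), (Nat.cast_nonneg (L i) : (0:ℝ) ≤ (L i : ℝ))]
    calc ∑ i, ‖x i‖ ^ 2
        ≤ ∑ i : Fin N, (2 * ‖a j0‖ ^ 2 + 2 * (L i : ℝ) ^ 2 * Fq E1 E2 a x) :=
          Finset.sum_le_sum fun i _ => key i
      _ = (∑ _i : Fin N, 2 * ‖a j0‖ ^ 2) + (∑ i : Fin N, 2 * (L i : ℝ) ^ 2) * Fq E1 E2 a x := by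
          rw [Finset.sum_add_distrib, Finset.sum_mul]
      _ ≤ (∑ _i : Fin N, 2 * ‖a j0‖ ^ 2) + ((∑ i : Fin N, 2 * (L i : ℝ) ^ 2) + 1) * Fq E1 E2 a x := by
          nlinarith

lemma objG_lb (d1 : Fin N × Fin N → ℝ) (d2 : Fin N × Fin m → ℝ)
    (hd1 : ∀ e ∈ E1, 0 ≤ d1 e) (hd2 : ∀ e ∈ E2, 0 ≤ d2 e)
    (x : Fin N → EuclideanSpace ℝ (Fin n))
    (u1 : Fin N × Fin N → EuclideanSpace ℝ (Fin n))
    (u2 : Fin N × Fin m → EuclideanSpace ℝ (Fin n))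
    (hu1 : ∀ e ∈ E1, ‖u1 e‖ ≤ 1) (hu2 : ∀ e ∈ E2, ‖u2 e‖ ≤ 1) :
    Fq E1 E2 a x / 2 - ((∑ e ∈ E1, 2 * d1 e ^ 2) + ∑ e ∈ E2, 2 * d2 e ^ 2)
      ≤ objG n N m E1 E2 a d1 d2 x u1 u2 := by
  have key1 : ∀ e ∈ E1, ‖x e.1 - x e.2‖ ^ 2 / 2 - 2 * d1 e ^ 2
      ≤ ‖x e.1 - x e.2‖ ^ 2 - 2 * d1 e * ⟪u1 e, x e.1 - x e.2⟫ := by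
    intro e he
    have hin : ⟪u1 e, x e.1 - x e.2⟫ ≤ ‖x e.1 - x e.2‖ := by
      refine le_trans (real_inner_le_norm _ _) ?_
      exact mul_le_of_le_one_left (norm_nonneg _) (hu1 e he)
    have hd := hd1 e he
    nlinarith [sq_nonneg (‖x e.1 - x e.2‖ - 2 * d1 e),
      mul_le_mul_of_nonneg_left hin hd, norm_nonneg (x e.1 - x e.2)]
  have key2 : ∀ e ∈ E2, ‖x e.1 - a e.2‖ ^ 2 / 2 - 2 * d2 e ^ 2
      ≤ ‖x e.1 - a e.2‖ ^ 2 - 2 * d2 e * ⟪u2 e, x e.1 - a e.2⟫ := by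
    intro e he
    have hin : ⟪u2 e, x e.1 - a e.2⟫ ≤ ‖x e.1 - a e.2‖ := by
      refine le_trans (real_inner_le_norm _ _) ?_
      exact mul_le_of_le_one_left (norm_nonneg _) (hu2 e he)
    have hd := hd2 e he
    nlinarith [sq_nonneg (‖x e.1 - a e.2‖ - 2 * d2 e),
      mul_le_mul_of_nonneg_left hin hd, norm_nonneg (x e.1 - a e.2)]
  have h1 := Finset.sum_le_sum key1
  have h2 := Finset.sum_le_sum key2
  have e1 : ∑ e ∈ E1, (‖x e.1 - x e.2‖ ^ 2 / 2 - 2 * d1 e ^ 2)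
      = (∑ e ∈ E1, ‖x e.1 - x e.2‖ ^ 2) / 2 - ∑ e ∈ E1, 2 * d1 e ^ 2 := by
    rw [Finset.sum_sub_distrib, Finset.sum_div]
  have e2 : ∑ e ∈ E2, (‖x e.1 - a e.2‖ ^ 2 / 2 - 2 * d2 e ^ 2)
      = (∑ e ∈ E2, ‖x e.1 - a e.2‖ ^ 2) / 2 - ∑ e ∈ E2, 2 * d2 e ^ 2 := by
    rw [Finset.sum_sub_distrib, Finset.sum_div]
  rw [e1] at h1
  rw [e2] at h2
  unfold Fq objG
  linarith

end Aux

/-- Proposition 2(iii): under Assumption 1, the constrained surrogate is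
coercive: along any sequence of feasible pairs `(x^k, u^k)` (each `u^k_{ij}`
in the closed unit ball) whose norm tends to infinity, `G(x^k,u^k) → ∞`. -/
theorem stmt7 (n N m : ℕ) (hn : 1 ≤ n) (hN : 1 ≤ N)
    (E1 : Finset (Fin N × Fin N)) (hE1 : ∀ e ∈ E1, e.1 < e.2)
    (E2 : Finset (Fin N × Fin m))
    (a : Fin m → EuclideanSpace ℝ (Fin n))
    (d1 : Fin N × Fin N → ℝ) (d2 : Fin N × Fin m → ℝ)
    (hd1 : ∀ e ∈ E1, 0 ≤ d1 e) (hd2 : ∀ e ∈ E2, 0 ≤ d2 e)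
    (hconn : (SimpleGraph.fromRel (netRel N m E1 E2)).Connected)
    (hm : 1 ≤ m)
    (x : ℕ → Fin N → EuclideanSpace ℝ (Fin n))
    (u1 : ℕ → Fin N × Fin N → EuclideanSpace ℝ (Fin n))
    (u2 : ℕ → Fin N × Fin m → EuclideanSpace ℝ (Fin n))
    (hu1 : ∀ k, ∀ e ∈ E1, ‖u1 k e‖ ≤ 1)
    (hu2 : ∀ k, ∀ e ∈ E2, ‖u2 k e‖ ≤ 1)
    (hnorm : Tendsto
      (fun k => Real.sqrt ((∑ i, ‖x k i‖ ^ 2) +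
        ((∑ e ∈ E1, ‖u1 k e‖ ^ 2) + ∑ e ∈ E2, ‖u2 k e‖ ^ 2)))
      atTop atTop) :
    Tendsto (fun k => objG n N m E1 E2 a d1 d2 (x k) (u1 k) (u2 k))
      atTop atTop := by
  classical
  obtain ⟨c1, c2, hc2, hcoer⟩ := sum_sq_le E1 E2 a hconn hm
  set C : ℝ := (∑ e ∈ E1, 2 * d1 e ^ 2) + ∑ e ∈ E2, 2 * d2 e ^ 2 with hC
  set S : ℕ → ℝ := fun k => ∑ i, ‖x k i‖ ^ 2 with hS
  set T : ℕ → ℝ := fun k => S k + ((∑ e ∈ E1, ‖u1 k e‖ ^ 2) + ∑ e ∈ E2, ‖u2 k e‖ ^ 2) with hT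
  have hTnn : ∀ k, 0 ≤ T k := by
    intro k
    have h1 : (0:ℝ) ≤ S k := Finset.sum_nonneg fun i _ => by positivity
    have h2 : (0:ℝ) ≤ ∑ e ∈ E1, ‖u1 k e‖ ^ 2 := Finset.sum_nonneg fun e _ => by positivity
    have h3 : (0:ℝ) ≤ ∑ e ∈ E2, ‖u2 k e‖ ^ 2 := Finset.sum_nonneg fun e _ => by positivity
    simp only [hT]; linarith
  have htot : Tendsto T atTop atTop := by
    have := hnorm.atTop_mul_atTop₀ hnorm
    refine Tendsto.congr (fun k => ?_) this
    exact Real.mul_self_sqrt (hTnn k)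
  -- u-part is bounded by the number of edges
  have hU : ∀ k, (∑ e ∈ E1, ‖u1 k e‖ ^ 2) + ∑ e ∈ E2, ‖u2 k e‖ ^ 2 ≤ (E1.card : ℝ) + E2.card := by
    intro k
    have h1 : (∑ e ∈ E1, ‖u1 k e‖ ^ 2) ≤ ∑ _e ∈ E1, (1:ℝ) :=
      Finset.sum_le_sum fun e he => by
        have := hu1 k e he; nlinarith [norm_nonneg (u1 k e)]
    have h2 : (∑ e ∈ E2, ‖u2 k e‖ ^ 2) ≤ ∑ _e ∈ E2, (1:ℝ) :=
      Finset.sum_le_sum fun e he => by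
        have := hu2 k e he; nlinarith [norm_nonneg (u2 k e)]
    simp only [Finset.sum_const, nsmul_eq_mul, mul_one] at h1 h2
    linarith
  have hStend : Tendsto S atTop atTop := by
    have h' : Tendsto (fun k => T k - ((E1.card : ℝ) + E2.card)) atTop atTop :=
      tendsto_atTop_add_const_right _ _ htot
    refine tendsto_atTop_mono (fun k => ?_) h'
    have := hU k
    simp only [hT]
    linarith
  -- lower bound function tends to infinity
  have hlb : Tendsto (fun k => ((S k - c1) / c2) / 2 - C) atTop atTop := by
    have h1 : Tendsto (fun k => S k - c1) atTop atTop :=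
      tendsto_atTop_add_const_right _ _ hStend
    have h2 : Tendsto (fun k => (S k - c1) / c2) atTop atTop :=
      h1.atTop_div_const hc2
    have h3 : Tendsto (fun k => ((S k - c1) / c2) / 2) atTop atTop :=
      h2.atTop_div_const (by norm_num)
    exact tendsto_atTop_add_const_right _ _ h3
  refine tendsto_atTop_mono (fun k => ?_) hlb
  have hF := hcoer (x k)
  have hFle : (S k - c1) / c2 ≤ Fq E1 E2 a (x k) := by
    rw [div_le_iff₀ hc2]
    simp only [hS] at hF ⊢
    nlinarith
  have hobj := objG_lb E1 E2 a d1 d2 hd1 hd2 (x k) (u1 k) (u2 k) (hu1 k) (hu2 k)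
  rw [← hC] at hobj
  linarith
end

section
/- (Proposition 2(iv).) Under Assumption 1, the minimization problem min { G(x,u) : x ∈ (ℝⁿ)^N, u_{ij} ∈ B for every edge (i,j) ∈ E } attains its optimal value, i.e., there exist x* ∈ (ℝⁿ)^N and u* with u*_{ij} ∈ B for every edge such that G(x*,u*) ≤ G(x,u) for all x ∈ (ℝⁿ)^N and all u with u_{ij} ∈ B for every edge. -/
open scoped RealInnerProductSpace BigOperators
open Finset

lemma term_lb {E : Type*} [NormedAddCommGroup E] [InnerProductSpace ℝ E]
    {d : ℝ} (hd : 0 ≤ d) {u v : E} (hu : ‖u‖ ≤ 1) :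
    -d ^ 2 ≤ ‖v‖ ^ 2 - 2 * d * ⟪u, v⟫ := by
  have h1 : ⟪u, v⟫ ≤ ‖v‖ := by
    calc ⟪u, v⟫ ≤ ‖u‖ * ‖v‖ := real_inner_le_norm u v
    _ ≤ 1 * ‖v‖ := mul_le_mul_of_nonneg_right hu (norm_nonneg v)
    _ = ‖v‖ := one_mul _
  nlinarith [sq_nonneg (‖v‖ - d), norm_nonneg v]

lemma term_big {E : Type*} [NormedAddCommGroup E] [InnerProductSpace ℝ E]
    {d D T : ℝ} (hd : 0 ≤ d) (hdD : d ≤ D) (hT : 2 * D ≤ T) {u v : E}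
    (hu : ‖u‖ ≤ 1) (hv : T ≤ ‖v‖) :
    T ^ 2 - 2 * D * T ≤ ‖v‖ ^ 2 - 2 * d * ⟪u, v⟫ := by
  have h1 : ⟪u, v⟫ ≤ ‖v‖ := by
    calc ⟪u, v⟫ ≤ ‖u‖ * ‖v‖ := real_inner_le_norm u v
    _ ≤ 1 * ‖v‖ := mul_le_mul_of_nonneg_right hu (norm_nonneg v)
    _ = ‖v‖ := one_mul _
  nlinarith [mul_nonneg (sub_nonneg.2 hv) (by nlinarith : (0:ℝ) ≤ ‖v‖ + T - 2*d),
    mul_nonneg (sub_nonneg.2 hdD) (by nlinarith : (0:ℝ) ≤ T)]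

lemma walk_dist_bound {V : Type*} {G : SimpleGraph V} {X : Type*} [PseudoMetricSpace X]
    (p : V → X) (T : ℝ) (hT : ∀ a b, G.Adj a b → dist (p a) (p b) ≤ T) :
    ∀ {v w : V} (W : G.Walk v w), dist (p v) (p w) ≤ W.length * T := by
  intro v w W
  induction W with
  | nil => simp
  | @cons u v' w h W ih =>
    calc dist (p u) (p w) ≤ dist (p u) (p v') + dist (p v') (p w) := dist_triangle _ _ _
    _ ≤ T + W.length * T := add_le_add (hT _ _ h) ih
    _ = (W.cons h).length * T := by rw [SimpleGraph.Walk.length_cons]; push_cast; ring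

set_option maxHeartbeats 1000000 in
/-- Proposition 2(iv): under Assumption 1, the problem
`min { G(x,u) : x, u_{ij} ∈ B }` attains its optimal value. -/
theorem stmt8 (n N m : ℕ) (hn : 1 ≤ n) (hN : 1 ≤ N)
    (E1 : Finset (Fin N × Fin N)) (hE1 : ∀ e ∈ E1, e.1 < e.2)
    (E2 : Finset (Fin N × Fin m))
    (a : Fin m → EuclideanSpace ℝ (Fin n))
    (d1 : Fin N × Fin N → ℝ) (d2 : Fin N × Fin m → ℝ)
    (hd1 : ∀ e ∈ E1, 0 ≤ d1 e) (hd2 : ∀ e ∈ E2, 0 ≤ d2 e)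
    (hconn : (SimpleGraph.fromRel (netRel N m E1 E2)).Connected)
    (hm : 1 ≤ m) :
    ∃ (xs : Fin N → EuclideanSpace ℝ (Fin n))
      (us1 : Fin N × Fin N → EuclideanSpace ℝ (Fin n))
      (us2 : Fin N × Fin m → EuclideanSpace ℝ (Fin n)),
      (∀ e ∈ E1, ‖us1 e‖ ≤ 1) ∧ (∀ e ∈ E2, ‖us2 e‖ ≤ 1) ∧
      ∀ (x : Fin N → EuclideanSpace ℝ (Fin n))
        (u1 : Fin N × Fin N → EuclideanSpace ℝ (Fin n))
        (u2 : Fin N × Fin m → EuclideanSpace ℝ (Fin n)),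
        (∀ e ∈ E1, ‖u1 e‖ ≤ 1) → (∀ e ∈ E2, ‖u2 e‖ ≤ 1) →
        objG n N m E1 E2 a d1 d2 xs us1 us2 ≤
          objG n N m E1 E2 a d1 d2 x u1 u2 := by
  classical
  have _dummy : True := trivial
  set G' := SimpleGraph.fromRel (netRel N m E1 E2) with hG'
  -- constants
  set D : ℝ := (∑ e ∈ E1, d1 e) + ∑ e ∈ E2, d2 e with hD
  set C1 : ℝ := ∑ e ∈ E1, (d1 e) ^ 2 with hC1
  set C2 : ℝ := ∑ e ∈ E2, (d2 e) ^ 2 with hC2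
  set C0 : ℝ := ∑ e ∈ E2, ‖a e.2‖ ^ 2 with hC0
  have hD0 : 0 ≤ D := add_nonneg (Finset.sum_nonneg hd1) (Finset.sum_nonneg hd2)
  have hC10 : 0 ≤ C1 := Finset.sum_nonneg fun e _ => sq_nonneg _
  have hC20 : 0 ≤ C2 := Finset.sum_nonneg fun e _ => sq_nonneg _
  have hC00 : 0 ≤ C0 := Finset.sum_nonneg fun e _ => sq_nonneg _
  have hd1D : ∀ e ∈ E1, d1 e ≤ D := by
    intro e he
    have := Finset.single_le_sum (f := d1) hd1 he
    have h2 : (0:ℝ) ≤ ∑ e ∈ E2, d2 e := Finset.sum_nonneg hd2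
    rw [hD]; linarith
  have hd2D : ∀ e ∈ E2, d2 e ≤ D := by
    intro e he
    have := Finset.single_le_sum (f := d2) hd2 he
    have h2 : (0:ℝ) ≤ ∑ e ∈ E1, d1 e := Finset.sum_nonneg hd1
    rw [hD]; linarith
  set T : ℝ := 2 * D + C1 + C2 + C0 + 1 with hT
  have hT1 : 1 ≤ T := by rw [hT]; linarith
  have hT2D : 2 * D ≤ T := by rw [hT]; linarith
  have hT0 : 0 ≤ T := by linarith
  set R : ℝ := (∑ j, ‖a j‖) + (N + m) * T with hR
  have hAnn : 0 ≤ ∑ j, ‖a j‖ := Finset.sum_nonneg fun j _ => norm_nonneg _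
  have hR0 : 0 ≤ R := by
    rw [hR]; positivity
  -- the compact feasible set
  set K1 : Set (Fin N → EuclideanSpace ℝ (Fin n)) := Set.univ.pi fun _ => Metric.closedBall 0 R with hK1
  set K2 : Set ((Fin N × Fin N) → EuclideanSpace ℝ (Fin n)) := Set.univ.pi fun _ => Metric.closedBall 0 1 with hK2
  set K3 : Set ((Fin N × Fin m) → EuclideanSpace ℝ (Fin n)) := Set.univ.pi fun _ => Metric.closedBall 0 1 with hK3
  set S : Set ((Fin N → EuclideanSpace ℝ (Fin n)) × ((Fin N × Fin N) → EuclideanSpace ℝ (Fin n)) × ((Fin N × Fin m) → EuclideanSpace ℝ (Fin n))) :=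
    K1 ×ˢ (K2 ×ˢ K3) with hS
  have hScpt : IsCompact S := by
    apply IsCompact.prod
    · exact isCompact_univ_pi fun _ => isCompact_closedBall _ _
    · exact (isCompact_univ_pi fun _ => isCompact_closedBall _ _).prod
        (isCompact_univ_pi fun _ => isCompact_closedBall _ _)
  have hzero : ((fun _ => (0:EuclideanSpace ℝ (Fin n))), (fun _ => (0:EuclideanSpace ℝ (Fin n))), (fun _ => (0:EuclideanSpace ℝ (Fin n)))) ∈ S := by
    constructor
    · intro i _; simpa using hR0
    constructor
    · intro e _; simp
    · intro e _; simp
  have hcont : Continuous (fun q : (Fin N → EuclideanSpace ℝ (Fin n)) × ((Fin N × Fin N) → EuclideanSpace ℝ (Fin n)) × ((Fin N × Fin m) → EuclideanSpace ℝ (Fin n)) =>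
      objG n N m E1 E2 a d1 d2 q.1 q.2.1 q.2.2) := by
    unfold objG
    apply Continuous.add
    · apply continuous_finset_sum
      intro e _
      refine Continuous.sub (Continuous.pow (Continuous.norm ?_) 2)
        (Continuous.mul continuous_const (Continuous.inner ?_ ?_))
      · exact ((continuous_apply e.1).comp continuous_fst).sub ((continuous_apply e.2).comp continuous_fst)
      · exact (continuous_apply e).comp (continuous_fst.comp continuous_snd)
      · exact ((continuous_apply e.1).comp continuous_fst).sub ((continuous_apply e.2).comp continuous_fst)
    · apply continuous_finset_sum
      intro e _
      refine Continuous.sub (Continuous.pow (Continuous.norm ?_) 2)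
        (Continuous.mul continuous_const (Continuous.inner ?_ ?_))
      · exact ((continuous_apply e.1).comp continuous_fst).sub continuous_const
      · exact (continuous_apply e).comp (continuous_snd.comp continuous_snd)
      · exact ((continuous_apply e.1).comp continuous_fst).sub continuous_const
  obtain ⟨q, hqS, hqmin⟩ := hScpt.exists_isMinOn ⟨_, hzero⟩ hcont.continuousOn
  obtain ⟨xs, us1, us2⟩ := q
  obtain ⟨hxsK, hus1K, hus2K⟩ := hqS
  refine ⟨xs, us1, us2, ?_, ?_, ?_⟩
  · intro e _
    have := hus1K e (Set.mem_univ e)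
    simpa using this
  · intro e _
    have := hus2K e (Set.mem_univ e)
    simpa using this
  intro x u1 u2 hu1 hu2
  -- truncate u to the edges
  set u1' : (Fin N × Fin N) → EuclideanSpace ℝ (Fin n) := fun e => if e ∈ E1 then u1 e else 0 with hu1'
  set u2' : (Fin N × Fin m) → EuclideanSpace ℝ (Fin n) := fun e => if e ∈ E2 then u2 e else 0 with hu2'
  have hu1'K : u1' ∈ K2 := by
    intro e _
    simp only [Metric.mem_closedBall, dist_zero_right, hu1']
    by_cases he : e ∈ E1
    · simpa [he] using hu1 e he
    · simp [he]
  have hu2'K : u2' ∈ K3 := by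
    intro e _
    simp only [Metric.mem_closedBall, dist_zero_right, hu2']
    by_cases he : e ∈ E2
    · simpa [he] using hu2 e he
    · simp [he]
  have hobj_eq : objG n N m E1 E2 a d1 d2 x u1 u2 = objG n N m E1 E2 a d1 d2 x u1' u2' := by
    unfold objG
    congr 1
    · exact Finset.sum_congr rfl fun e he => by rw [hu1']; simp [he]
    · exact Finset.sum_congr rfl fun e he => by rw [hu2']; simp [he]
  rw [hobj_eq]
  have hu1'le : ∀ e, ‖u1' e‖ ≤ 1 := by
    intro e; have := hu1'K e (Set.mem_univ e); simpa using this
  have hu2'le : ∀ e, ‖u2' e‖ ≤ 1 := by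
    intro e; have := hu2'K e (Set.mem_univ e); simpa using this
  by_cases hxK : x ∈ K1
  · have h := isMinOn_iff.1 hqmin (x, u1', u2') ⟨hxK, hu1'K, hu2'K⟩
    simpa using h
  -- coercivity case
  have hzeroval : objG n N m E1 E2 a d1 d2 (fun _ => 0) (fun _ => 0) (fun _ => 0) = C0 := by
    unfold objG
    rw [hC0]
    rw [Finset.sum_eq_zero (fun e _ => by simp), zero_add]
    apply Finset.sum_congr rfl
    intro e _
    simp
  have hmin0 : objG n N m E1 E2 a d1 d2 xs us1 us2 ≤ C0 := by
    have h := isMinOn_iff.1 hqmin _ hzero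
    exact le_of_le_of_eq h hzeroval
  -- lower bounds for the two sums, generically
  have hS1lb : -C1 ≤ ∑ e ∈ E1, (‖x e.1 - x e.2‖ ^ 2 - 2 * d1 e * ⟪u1' e, x e.1 - x e.2⟫) := by
    rw [hC1, ← Finset.sum_neg_distrib]
    exact Finset.sum_le_sum fun e he => term_lb (hd1 e he) (hu1'le e)
  have hS2lb : -C2 ≤ ∑ e ∈ E2, (‖x e.1 - a e.2‖ ^ 2 - 2 * d2 e * ⟪u2' e, x e.1 - a e.2⟫) := by
    rw [hC2, ← Finset.sum_neg_distrib]
    exact Finset.sum_le_sum fun e he => term_lb (hd2 e he) (hu2'le e)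
  -- find a long edge
  obtain ⟨i, hxi⟩ : ∃ i, R < ‖x i‖ := by
    by_contra h
    push_neg at h
    exact hxK fun i _ => by simpa [Metric.mem_closedBall, dist_zero_right] using h i
  set pos : (Fin N ⊕ Fin m) → EuclideanSpace ℝ (Fin n) := Sum.elim x a with hpos
  have hbig : ∃ e0, (e0 ∈ E1 ∧ T ≤ ‖x e0.1 - x e0.2‖) ∨
      ∃ f0, f0 ∈ E2 ∧ T ≤ ‖x f0.1 - a f0.2‖ := by
    by_cases hb : ∃ p q, G'.Adj p q ∧ T < dist (pos p) (pos q)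
    · obtain ⟨p, q, hadj, hdq⟩ := hb
      rw [hG', SimpleGraph.fromRel_adj] at hadj
      obtain ⟨-, hr⟩ := hadj
      rcases p with i' | j' <;> rcases q with i'' | j''
      · -- inl inl
        rcases hr with h | h
        · exact ⟨(i', i''), Or.inl ⟨h, by
            rw [hpos] at hdq; simp only [Sum.elim_inl] at hdq
            rw [dist_eq_norm] at hdq; exact le_of_lt hdq⟩⟩
        · exact ⟨(i'', i'), Or.inl ⟨h, by
            rw [hpos] at hdq; simp only [Sum.elim_inl] at hdq
            rw [dist_comm, dist_eq_norm] at hdq; exact le_of_lt hdq⟩⟩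
      · rcases hr with h | h
        · refine ⟨(⟨0,hN⟩,⟨0,hN⟩), Or.inr ⟨(i', j''), h, ?_⟩⟩
          rw [hpos] at hdq; simp only [Sum.elim_inl, Sum.elim_inr] at hdq
          rw [dist_eq_norm] at hdq; exact le_of_lt hdq
        · exact absurd h (by simp [netRel])
      · rcases hr with h | h
        · exact absurd h (by simp [netRel])
        · refine ⟨(⟨0,hN⟩,⟨0,hN⟩), Or.inr ⟨(i'', j'), h, ?_⟩⟩
          rw [hpos] at hdq; simp only [Sum.elim_inl, Sum.elim_inr] at hdq
          rw [dist_comm, dist_eq_norm] at hdq; exact le_of_lt hdq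
      · rcases hr with h | h <;> exact absurd h (by simp [netRel])
    · exfalso
      push_neg at hb
      obtain ⟨W⟩ := hconn.preconnected (Sum.inl i) (Sum.inr ⟨0, hm⟩)
      set P := W.toPath with hP
      have hlen : P.1.length < N + m := by
        have := SimpleGraph.Walk.IsPath.length_lt P.2
        simpa using this
      have hbd := walk_dist_bound pos T hb P.1
      have h1 : dist (pos (Sum.inl i)) (pos (Sum.inr ⟨0, hm⟩)) ≤ (N + m) * T := by
        refine le_trans hbd ?_
        apply mul_le_mul_of_nonneg_right _ hT0
        exact_mod_cast le_of_lt hlen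
      rw [hpos] at h1
      simp only [Sum.elim_inl, Sum.elim_inr, dist_eq_norm] at h1
      have h2 : ‖x i‖ - ‖a ⟨0, hm⟩‖ ≤ ‖x i - a ⟨0, hm⟩‖ := norm_sub_norm_le _ _
      have h3 : ‖a ⟨0, hm⟩‖ ≤ ∑ j, ‖a j‖ :=
        Finset.single_le_sum (f := fun j => ‖a j‖) (fun j _ => norm_nonneg _) (Finset.mem_univ _)
      rw [hR] at hxi
      linarith
  -- conclude objG x u1' u2' is large
  have hbigval : C0 + 1 ≤ objG n N m E1 E2 a d1 d2 x u1' u2' := by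
    have hkey : T ^ 2 - 2 * D * T - C1 - C2 ≤ objG n N m E1 E2 a d1 d2 x u1' u2' := by
      obtain ⟨e0, he0 | ⟨f0, hf0, hf0big⟩⟩ := hbig
      · obtain ⟨he0E, he0big⟩ := he0
        have hterm : T ^ 2 - 2 * D * T ≤ ‖x e0.1 - x e0.2‖ ^ 2 - 2 * d1 e0 * ⟪u1' e0, x e0.1 - x e0.2⟫ :=
          term_big (hd1 e0 he0E) (hd1D e0 he0E) hT2D (hu1'le e0) he0big
        have hsum : (T ^ 2 - 2 * D * T) + -C1 ≤
            ∑ e ∈ E1, (‖x e.1 - x e.2‖ ^ 2 - 2 * d1 e * ⟪u1' e, x e.1 - x e.2⟫) := by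
          have h0 : ∀ e ∈ E1, 0 ≤ (‖x e.1 - x e.2‖ ^ 2 - 2 * d1 e * ⟪u1' e, x e.1 - x e.2⟫) + (d1 e)^2 := by
            intro e he
            have := term_lb (hd1 e he) (hu1'le e) (v := x e.1 - x e.2)
            linarith
          have := Finset.single_le_sum h0 he0E
          rw [Finset.sum_add_distrib] at this
          rw [← hC1] at this
          linarith [sq_nonneg (d1 e0)]
        unfold objG
        exact le_trans (by linarith : T ^ 2 - 2 * D * T - C1 - C2 ≤ ((T ^ 2 - 2 * D * T) + -C1) + -C2) (add_le_add hsum hS2lb)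
      · have hterm : T ^ 2 - 2 * D * T ≤ ‖x f0.1 - a f0.2‖ ^ 2 - 2 * d2 f0 * ⟪u2' f0, x f0.1 - a f0.2⟫ :=
          term_big (hd2 f0 hf0) (hd2D f0 hf0) hT2D (hu2'le f0) hf0big
        have hsum : (T ^ 2 - 2 * D * T) + -C2 ≤
            ∑ e ∈ E2, (‖x e.1 - a e.2‖ ^ 2 - 2 * d2 e * ⟪u2' e, x e.1 - a e.2⟫) := by
          have h0 : ∀ e ∈ E2, 0 ≤ (‖x e.1 - a e.2‖ ^ 2 - 2 * d2 e * ⟪u2' e, x e.1 - a e.2⟫) + (d2 e)^2 := by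
            intro e he
            have := term_lb (hd2 e he) (hu2'le e) (v := x e.1 - a e.2)
            linarith
          have := Finset.single_le_sum h0 hf0
          rw [Finset.sum_add_distrib] at this
          rw [← hC2] at this
          linarith [sq_nonneg (d2 f0)]
        unfold objG
        exact le_trans (by linarith : T ^ 2 - 2 * D * T - C1 - C2 ≤ -C1 + ((T ^ 2 - 2 * D * T) + -C2)) (add_le_add hS1lb hsum)
    have harith : C0 + 1 ≤ T ^ 2 - 2 * D * T - C1 - C2 := by
      rw [hT]
      nlinarith [mul_nonneg hD0 (add_nonneg (add_nonneg hC10 hC20) hC00),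
        sq_nonneg (C1 + C2 + C0)]
    linarith
  linarith [hmin0]
end

section
/- For every fixed u (assigning u_{ij} ∈ ℝⁿ to each edge), the function x ↦ G(x,u) on (ℝⁿ)^N is differentiable and its gradient is Lipschitz continuous with Lipschitz constant L = 2(2 d_max + m), where d_max = max_{i∈V} |N(i) ∩ V| is the maximal number of non-anchor neighbors over all non-anchor sensors. -/
open scoped RealInnerProductSpace BigOperators NNReal
open Finset

/-- The space `(ℝⁿ)^N` of sensor configurations, with the Euclidean norm. -/
abbrev ConfSpace (n N : ℕ) := PiLp 2 (fun _ : Fin N => EuclideanSpace ℝ (Fin n))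

section Aux
variable {n N m : ℕ}

/-- Coordinate projection on the configuration space. -/
noncomputable def PJ (n N : ℕ) (i : Fin N) :
    ConfSpace n N →L[ℝ] EuclideanSpace ℝ (Fin n) :=
  PiLp.proj 2 (fun _ : Fin N => EuclideanSpace ℝ (Fin n)) i

@[simp] lemma PJ_apply (i : Fin N) (x : ConfSpace n N) : PJ n N i x = x i := rfl

noncomputable def Dmap (n N m : ℕ)
    (E1 : Finset (Fin N × Fin N)) (E2 : Finset (Fin N × Fin m))
    (a : Fin m → EuclideanSpace ℝ (Fin n))
    (d1 : Fin N × Fin N → ℝ) (d2 : Fin N × Fin m → ℝ)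
    (u1 : Fin N × Fin N → EuclideanSpace ℝ (Fin n))
    (u2 : Fin N × Fin m → EuclideanSpace ℝ (Fin n))
    (x : ConfSpace n N) : ConfSpace n N →L[ℝ] ℝ :=
  (∑ e ∈ E1, ((innerSL ℝ (2 • (x e.1 - x e.2) - (2 * d1 e) • u1 e) : EuclideanSpace ℝ (Fin n) →L[ℝ] ℝ)).comp
      (PJ n N e.1 - PJ n N e.2)) +
  ∑ e ∈ E2, ((innerSL ℝ (2 • (x e.1 - a e.2) - (2 * d2 e) • u2 e) : EuclideanSpace ℝ (Fin n) →L[ℝ] ℝ)).comp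
      (PJ n N e.1)

lemma hasF_term1 (d : ℝ) (u : EuclideanSpace ℝ (Fin n)) (i j : Fin N) (x : ConfSpace n N) :
    HasFDerivAt (fun y : ConfSpace n N => ‖y i - y j‖ ^ 2 - 2 * d * ⟪u, y i - y j⟫)
      (((innerSL ℝ (2 • (x i - x j) - (2 * d) • u) : EuclideanSpace ℝ (Fin n) →L[ℝ] ℝ)).comp
        (PJ n N i - PJ n N j)) x := by
  have hP : HasFDerivAt (fun y : ConfSpace n N => y i - y j)
      (PJ n N i - PJ n N j) x :=
    (PJ n N i).hasFDerivAt.sub (PJ n N j).hasFDerivAt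
  have h1 := hP.norm_sq
  have h2 := ((hasFDerivAt_const u x).inner ℝ hP).const_mul (2 * d)
  refine (h1.sub h2).congr_fderiv ?_
  ext w
  simp [fderivInnerCLM_apply, inner_sub_left, inner_smul_left, smul_sub, two_smul, mul_sub, Finset.sum_sub_distrib, inner_sub_right]
  ring

lemma hasF_term2 (d : ℝ) (u c : EuclideanSpace ℝ (Fin n)) (i : Fin N) (x : ConfSpace n N) :
    HasFDerivAt (fun y : ConfSpace n N => ‖y i - c‖ ^ 2 - 2 * d * ⟪u, y i - c⟫)
      (((innerSL ℝ (2 • (x i - c) - (2 * d) • u) : EuclideanSpace ℝ (Fin n) →L[ℝ] ℝ)).comp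
        (PJ n N i)) x := by
  have hP : HasFDerivAt (fun y : ConfSpace n N => y i - c) (PJ n N i) x :=
    (PJ n N i).hasFDerivAt.sub_const c
  have h1 := hP.norm_sq
  have h2 := ((hasFDerivAt_const u x).inner ℝ hP).const_mul (2 * d)
  refine (h1.sub h2).congr_fderiv ?_
  ext w
  simp [fderivInnerCLM_apply, inner_sub_left, inner_smul_left, smul_sub, two_smul]


lemma sum_fiber {α : Type*} (s : Finset α) (g : α → Fin N) (f : Fin N → ℝ) :
    ∑ e ∈ s, f (g e) = ∑ i, ((s.filter (fun e => g e = i)).card : ℝ) * f i := by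
  rw [← Finset.sum_fiberwise_of_maps_to (fun e _ => Finset.mem_univ (g e)) (fun e => f (g e))]
  refine Finset.sum_congr rfl fun i _ => ?_
  calc ∑ e ∈ s.filter (fun e => g e = i), f (g e)
      = ∑ e ∈ s.filter (fun e => g e = i), f i :=
        Finset.sum_congr rfl (fun e he => by rw [(Finset.mem_filter.1 he).2])
    _ = ((s.filter (fun e => g e = i)).card : ℝ) * f i := by
        rw [Finset.sum_const, nsmul_eq_mul]

lemma S_le (E1 : Finset (Fin N × Fin N)) (E2 : Finset (Fin N × Fin m))
    (dmax : ℕ)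
    (hdeg : ∀ i : Fin N, (E1.filter (fun e => e.1 = i)).card
        + (E1.filter (fun e => e.2 = i)).card ≤ dmax)
    (v : ConfSpace n N) :
    ((∑ e ∈ E1, ‖v e.1 - v e.2‖ ^ 2) + ∑ e ∈ E2, ‖v e.1‖ ^ 2)
      ≤ (2 * dmax + m : ℝ) * ‖v‖ ^ 2 := by
  have hv : ‖v‖ ^ 2 = ∑ i, ‖v i‖ ^ 2 := by
    simpa using PiLp.norm_sq_eq_of_L2 (fun _ : Fin N => EuclideanSpace ℝ (Fin n)) v
  have h1 : ∑ e ∈ E1, ‖v e.1 - v e.2‖ ^ 2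
      ≤ ∑ e ∈ E1, (2 * ‖v e.1‖ ^ 2 + 2 * ‖v e.2‖ ^ 2) := by
    refine Finset.sum_le_sum fun e _ => ?_
    have h := norm_sub_le (v e.1) (v e.2)
    nlinarith [sq_nonneg (‖v e.1‖ - ‖v e.2‖), norm_nonneg (v e.1 - v e.2),
      norm_nonneg (v e.1), norm_nonneg (v e.2)]
  have hcard2 : ∀ i : Fin N, ((E2.filter (fun e => e.1 = i)).card) ≤ m := by
    intro i
    have : (E2.filter (fun e => e.1 = i)).card ≤ (Finset.univ : Finset (Fin m)).card := by
      refine Finset.card_le_card_of_injOn (fun e => e.2) (fun e _ => Finset.mem_univ _) ?_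
      intro e he e' he' h2
      have h1e := (Finset.mem_filter.1 he).2
      have h1e' := (Finset.mem_filter.1 he').2
      exact Prod.ext (h1e.trans h1e'.symm) h2
    simpa using this
  calc ((∑ e ∈ E1, ‖v e.1 - v e.2‖ ^ 2) + ∑ e ∈ E2, ‖v e.1‖ ^ 2)
      ≤ (∑ e ∈ E1, (2 * ‖v e.1‖ ^ 2 + 2 * ‖v e.2‖ ^ 2)) + ∑ e ∈ E2, ‖v e.1‖ ^ 2 := by
        exact add_le_add_left h1 _
    _ = 2 * (∑ e ∈ E1, ‖v e.1‖ ^ 2) + 2 * (∑ e ∈ E1, ‖v e.2‖ ^ 2)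
        + ∑ e ∈ E2, ‖v e.1‖ ^ 2 := by
        rw [Finset.sum_add_distrib, Finset.mul_sum, Finset.mul_sum]
    _ = ∑ i, (2 * ((E1.filter (fun e => e.1 = i)).card : ℝ)
          + 2 * ((E1.filter (fun e => e.2 = i)).card : ℝ)
          + ((E2.filter (fun e => e.1 = i)).card : ℝ)) * ‖v i‖ ^ 2 := by
        rw [sum_fiber E1 (fun e => e.1) (fun i => ‖v i‖ ^ 2),
          sum_fiber E1 (fun e => e.2) (fun i => ‖v i‖ ^ 2),
          sum_fiber E2 (fun e => e.1) (fun i => ‖v i‖ ^ 2)]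
        rw [Finset.mul_sum, Finset.mul_sum, ← Finset.sum_add_distrib,
          ← Finset.sum_add_distrib]
        refine Finset.sum_congr rfl fun i _ => ?_
        ring
    _ ≤ ∑ i, (2 * dmax + m : ℝ) * ‖v i‖ ^ 2 := by
        refine Finset.sum_le_sum fun i _ => ?_
        refine mul_le_mul_of_nonneg_right ?_ (sq_nonneg _)
        have hd := hdeg i
        have hc := hcard2 i
        push_cast
        have hd' : ((E1.filter (fun e => e.1 = i)).card : ℝ)
            + ((E1.filter (fun e => e.2 = i)).card : ℝ) ≤ (dmax : ℝ) := by
          exact_mod_cast hd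
        have hc' : ((E2.filter (fun e => e.1 = i)).card : ℝ) ≤ (m : ℝ) := by
          exact_mod_cast hc
        nlinarith
    _ = (2 * dmax + m : ℝ) * ‖v‖ ^ 2 := by rw [← Finset.mul_sum, hv]

lemma key_bound (E1 : Finset (Fin N × Fin N)) (E2 : Finset (Fin N × Fin m))
    (dmax : ℕ)
    (hdeg : ∀ i : Fin N, (E1.filter (fun e => e.1 = i)).card
        + (E1.filter (fun e => e.2 = i)).card ≤ dmax)
    (v w : ConfSpace n N) :
    |(∑ e ∈ E1, ⟪v e.1 - v e.2, w e.1 - w e.2⟫) + ∑ e ∈ E2, ⟪v e.1, w e.1⟫|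
      ≤ (2 * dmax + m : ℝ) * (‖v‖ * ‖w‖) := by
  set T1 := ∑ e ∈ E1, ‖v e.1 - v e.2‖ * ‖w e.1 - w e.2‖ with hT1
  set T2 := ∑ e ∈ E2, ‖v e.1‖ * ‖w e.1‖ with hT2
  have habs : |(∑ e ∈ E1, ⟪v e.1 - v e.2, w e.1 - w e.2⟫) + ∑ e ∈ E2, ⟪v e.1, w e.1⟫|
      ≤ T1 + T2 := by
    refine (abs_add_le _ _).trans (add_le_add ?_ ?_) <;>
      refine (Finset.abs_sum_le_sum_abs _ _).trans (Finset.sum_le_sum fun e _ => ?_) <;>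
      exact abs_real_inner_le_norm _ _
  have hcs : (T1 + T2) ^ 2
      ≤ ((∑ e ∈ E1, ‖v e.1 - v e.2‖ ^ 2) + ∑ e ∈ E2, ‖v e.1‖ ^ 2)
        * ((∑ e ∈ E1, ‖w e.1 - w e.2‖ ^ 2) + ∑ e ∈ E2, ‖w e.1‖ ^ 2) := by
    have h := Finset.sum_mul_sq_le_sq_mul_sq (E1.disjSum E2)
      (Sum.elim (fun e : Fin N × Fin N => ‖v e.1 - v e.2‖) (fun e : Fin N × Fin m => ‖v e.1‖))
      (Sum.elim (fun e : Fin N × Fin N => ‖w e.1 - w e.2‖) (fun e : Fin N × Fin m => ‖w e.1‖))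
    simpa [Finset.sum_disjSum, hT1, hT2] using h
  have hSv := S_le E1 E2 dmax hdeg v
  have hSw := S_le E1 E2 dmax hdeg w
  have hK : (0 : ℝ) ≤ (2 * dmax + m : ℝ) := by positivity
  have hT : 0 ≤ T1 + T2 := by
    have : 0 ≤ T1 := Finset.sum_nonneg fun e _ => mul_nonneg (norm_nonneg _) (norm_nonneg _)
    have : 0 ≤ T2 := Finset.sum_nonneg fun e _ => mul_nonneg (norm_nonneg _) (norm_nonneg _)
    positivity
  have hR : 0 ≤ (2 * dmax + m : ℝ) * (‖v‖ * ‖w‖) := by positivity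
  have hsq : (T1 + T2) ^ 2 ≤ ((2 * dmax + m : ℝ) * (‖v‖ * ‖w‖)) ^ 2 := by
    have hSw0 : 0 ≤ (∑ e ∈ E1, ‖w e.1 - w e.2‖ ^ 2) + ∑ e ∈ E2, ‖w e.1‖ ^ 2 := by positivity
    calc (T1 + T2) ^ 2 ≤ _ := hcs
      _ ≤ ((2 * dmax + m : ℝ) * ‖v‖ ^ 2) * ((2 * dmax + m : ℝ) * ‖w‖ ^ 2) :=
          mul_le_mul hSv hSw hSw0 (by positivity)
      _ = ((2 * dmax + m : ℝ) * (‖v‖ * ‖w‖)) ^ 2 := by ring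
  have hfin : T1 + T2 ≤ (2 * dmax + m : ℝ) * (‖v‖ * ‖w‖) := by
    have h := Real.sqrt_le_sqrt hsq
    rwa [Real.sqrt_sq hT, Real.sqrt_sq hR] at h
  exact habs.trans hfin


variable (E1 : Finset (Fin N × Fin N)) (E2 : Finset (Fin N × Fin m))
    (a : Fin m → EuclideanSpace ℝ (Fin n))
    (d1 : Fin N × Fin N → ℝ) (d2 : Fin N × Fin m → ℝ)
    (u1 : Fin N × Fin N → EuclideanSpace ℝ (Fin n))
    (u2 : Fin N × Fin m → EuclideanSpace ℝ (Fin n))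

lemma hasF_objG (x : ConfSpace n N) :
    HasFDerivAt (fun y : ConfSpace n N => objG n N m E1 E2 a d1 d2 y u1 u2)
      (Dmap n N m E1 E2 a d1 d2 u1 u2 x) x := by
  have h1 := HasFDerivAt.fun_sum (fun e (_ : e ∈ E1) => hasF_term1 (d1 e) (u1 e) e.1 e.2 x)
  have h2 := HasFDerivAt.fun_sum (fun e (_ : e ∈ E2) => hasF_term2 (d2 e) (u2 e) (a e.2) e.1 x)
  exact h1.add h2

lemma Dmap_sub_apply (x y w : ConfSpace n N) :
    (Dmap n N m E1 E2 a d1 d2 u1 u2 x - Dmap n N m E1 E2 a d1 d2 u1 u2 y) w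
      = 2 * ((∑ e ∈ E1, ⟪(x - y) e.1 - (x - y) e.2, w e.1 - w e.2⟫)
          + ∑ e ∈ E2, ⟪(x - y) e.1, w e.1⟫) := by
  simp only [ContinuousLinearMap.sub_apply, Dmap, ContinuousLinearMap.add_apply,
    ContinuousLinearMap.coe_sum', Finset.sum_apply, ContinuousLinearMap.comp_apply,
    innerSL_apply_apply, PJ_apply]
  rw [add_sub_add_comm, ← Finset.sum_sub_distrib, ← Finset.sum_sub_distrib,
    mul_add, Finset.mul_sum, Finset.mul_sum]
  congr 1 <;> refine Finset.sum_congr rfl fun e _ => ?_ <;>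
    · have h1 : ∀ i : Fin N, (x - y) i = x i - y i := fun _ => rfl
      simp [h1, inner_sub_left, inner_smul_left, two_smul, inner_add_left, inner_sub_right, mul_sub,
        sub_mul, add_mul, Finset.sum_sub_distrib, Finset.sum_add_distrib]
      ring

end Aux

/-- For every fixed `u`, the function `x ↦ G(x,u)` is differentiable and its
gradient is Lipschitz continuous with constant `L = 2(2 d_max + m)`, where
`d_max` is the maximal number of non-anchor neighbors over the non-anchor
sensors. -/
theorem stmt10 (n N m : ℕ) (hn : 1 ≤ n) (hN : 1 ≤ N)
    (E1 : Finset (Fin N × Fin N)) (hE1 : ∀ e ∈ E1, e.1 < e.2)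
    (E2 : Finset (Fin N × Fin m))
    (a : Fin m → EuclideanSpace ℝ (Fin n))
    (d1 : Fin N × Fin N → ℝ) (d2 : Fin N × Fin m → ℝ)
    (hd1 : ∀ e ∈ E1, 0 ≤ d1 e) (hd2 : ∀ e ∈ E2, 0 ≤ d2 e)
    (u1 : Fin N × Fin N → EuclideanSpace ℝ (Fin n))
    (u2 : Fin N × Fin m → EuclideanSpace ℝ (Fin n))
    (dmax : ℕ)
    (hdmax : dmax = Finset.univ.sup (fun i : Fin N =>
      (E1.filter (fun e => e.1 = i)).card + (E1.filter (fun e => e.2 = i)).card)) :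
    Differentiable ℝ
      (fun x : ConfSpace n N => objG n N m E1 E2 a d1 d2 x u1 u2) ∧
    LipschitzWith ((2 * (2 * dmax + m) : ℕ) : ℝ≥0)
      (gradient (fun x : ConfSpace n N => objG n N m E1 E2 a d1 d2 x u1 u2)) := by
  refine ⟨fun x => (hasF_objG E1 E2 a d1 d2 u1 u2 x).differentiableAt, ?_⟩
  have hdeg : ∀ i : Fin N, (E1.filter (fun e => e.1 = i)).card
      + (E1.filter (fun e => e.2 = i)).card ≤ dmax := by
    intro i; rw [hdmax]
    exact Finset.le_sup (f := fun i : Fin N => (E1.filter (fun e => e.1 = i)).card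
      + (E1.filter (fun e => e.2 = i)).card) (Finset.mem_univ i)
  have hgrad : ∀ x : ConfSpace n N,
      gradient (fun y : ConfSpace n N => objG n N m E1 E2 a d1 d2 y u1 u2) x
        = (InnerProductSpace.toDual ℝ (ConfSpace n N)).symm
            (Dmap n N m E1 E2 a d1 d2 u1 u2 x) :=
    fun x => ((hasF_objG E1 E2 a d1 d2 u1 u2 x).hasGradientAt).gradient
  refine LipschitzWith.of_dist_le_mul fun x y => ?_
  rw [dist_eq_norm, dist_eq_norm, hgrad x, hgrad y, ← map_sub,
    LinearIsometryEquiv.norm_map]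
  have hcast : (((2 * (2 * dmax + m) : ℕ) : ℝ≥0) : ℝ) = 2 * (2 * (dmax : ℝ) + m) := by
    push_cast; ring
  rw [hcast]
  refine ContinuousLinearMap.opNorm_le_bound _ (by positivity) fun w => ?_
  rw [Dmap_sub_apply, Real.norm_eq_abs, abs_mul, abs_two]
  have hk := key_bound E1 E2 dmax hdeg (x - y) w
  calc 2 * |(∑ e ∈ E1, ⟪(x - y) e.1 - (x - y) e.2, w e.1 - w e.2⟫)
        + ∑ e ∈ E2, ⟪(x - y) e.1, w e.1⟫|
      ≤ 2 * ((2 * (dmax : ℝ) + m) * (‖x - y‖ * ‖w‖)) :=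
        mul_le_mul_of_nonneg_left hk (by norm_num)
    _ = 2 * (2 * (dmax : ℝ) + ↑m) * ‖x - y‖ * ‖w‖ := by ring
end

section
/- (Lemma 2, boundedness.) Under Assumption 1, any sequence (x^k, u^k)_{k∈ℕ} generated by the Unifying AM algorithm is bounded. -/
open scoped RealInnerProductSpace BigOperators
open Finset

/-- `(x^k, u^k)` is a sequence generated by the Unifying AM algorithm with
clusters `C 0, …, C (q−1)`:
* the initial `u^0` is feasible (each `u^0_{ij}` in the closed unit ball);
* the sensor update produces `x^{k+1}` from `x^k` through intermediate
  configurations `z 0 = x^k, …, z q = x^{k+1}`, where `z (l+1)` agrees with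
  `z l` off the cluster `C l` and minimizes `G(·, u^k)` over all
  configurations agreeing with `z l` off `C l`;
* the auxiliary update sets `u^{k+1}_{ij} = v^{k+1}_{ij}/‖v^{k+1}_{ij}‖` when
  `v^{k+1}_{ij} ≠ 0` and `0` otherwise (both cases captured by `‖v‖⁻¹ • v`,
  since `(0:ℝ)⁻¹ = 0`). -/
def IsAMSeq (n N m : ℕ)
    (E1 : Finset (Fin N × Fin N)) (E2 : Finset (Fin N × Fin m))
    (a : Fin m → EuclideanSpace ℝ (Fin n))
    (d1 : Fin N × Fin N → ℝ) (d2 : Fin N × Fin m → ℝ)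
    (q : ℕ) (C : Fin q → Finset (Fin N))
    (x : ℕ → Fin N → EuclideanSpace ℝ (Fin n))
    (u1 : ℕ → Fin N × Fin N → EuclideanSpace ℝ (Fin n))
    (u2 : ℕ → Fin N × Fin m → EuclideanSpace ℝ (Fin n)) : Prop :=
  (∀ e ∈ E1, ‖u1 0 e‖ ≤ 1) ∧ (∀ e ∈ E2, ‖u2 0 e‖ ≤ 1) ∧
  (∀ k : ℕ, ∃ z : Fin (q + 1) → Fin N → EuclideanSpace ℝ (Fin n),
    z 0 = x k ∧ z (Fin.last q) = x (k + 1) ∧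
    ∀ l : Fin q,
      (∀ i : Fin N, i ∉ C l → z l.succ i = z l.castSucc i) ∧
      (∀ w : Fin N → EuclideanSpace ℝ (Fin n),
        (∀ i : Fin N, i ∉ C l → w i = z l.castSucc i) →
        objG n N m E1 E2 a d1 d2 (z l.succ) (u1 k) (u2 k) ≤
          objG n N m E1 E2 a d1 d2 w (u1 k) (u2 k))) ∧
  (∀ k : ℕ, ∀ e ∈ E1, u1 (k + 1) e =
    ‖x (k + 1) e.1 - x (k + 1) e.2‖⁻¹ • (x (k + 1) e.1 - x (k + 1) e.2)) ∧
  (∀ k : ℕ, ∀ e ∈ E2, u2 (k + 1) e =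
    ‖x (k + 1) e.1 - a e.2‖⁻¹ • (x (k + 1) e.1 - a e.2))


section Helpers

variable {F : Type*} [NormedAddCommGroup F] [InnerProductSpace ℝ F]

lemma norm_invsmul_le_one (v : F) : ‖‖v‖⁻¹ • v‖ ≤ 1 := by
  rw [norm_smul, norm_inv, norm_norm]
  rcases eq_or_ne v 0 with h | h
  · simp [h]
  · rw [inv_mul_cancel₀ (norm_ne_zero_iff.mpr h)]

lemma inner_invsmul_self (v : F) : ⟪‖v‖⁻¹ • v, v⟫ = ‖v‖ := by
  rcases eq_or_ne v 0 with h | h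
  · simp [h]
  · rw [real_inner_smul_left, real_inner_self_eq_norm_sq, sq,
      inv_mul_cancel_left₀ (norm_ne_zero_iff.mpr h)]

end Helpers

set_option maxHeartbeats 1000000 in
/-- Lemma 2 (boundedness): under Assumption 1, any sequence generated by the
Unifying AM algorithm is bounded. -/
theorem stmt12 (n N m : ℕ) (hn : 1 ≤ n) (hN : 1 ≤ N)
    (E1 : Finset (Fin N × Fin N)) (hE1 : ∀ e ∈ E1, e.1 < e.2)
    (E2 : Finset (Fin N × Fin m))
    (a : Fin m → EuclideanSpace ℝ (Fin n))
    (d1 : Fin N × Fin N → ℝ) (d2 : Fin N × Fin m → ℝ)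
    (hd1 : ∀ e ∈ E1, 0 ≤ d1 e) (hd2 : ∀ e ∈ E2, 0 ≤ d2 e)
    (hconn : (SimpleGraph.fromRel (netRel N m E1 E2)).Connected)
    (hm : 1 ≤ m)
    (q : ℕ) (C : Fin q → Finset (Fin N))
    (hCne : ∀ l, (C l).Nonempty)
    (hCdisj : ∀ l l', l ≠ l' → Disjoint (C l) (C l'))
    (hCcover : ∀ i : Fin N, ∃ l, i ∈ C l)
    (x : ℕ → Fin N → EuclideanSpace ℝ (Fin n))
    (u1 : ℕ → Fin N × Fin N → EuclideanSpace ℝ (Fin n))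
    (u2 : ℕ → Fin N × Fin m → EuclideanSpace ℝ (Fin n))
    (hAM : IsAMSeq n N m E1 E2 a d1 d2 q C x u1 u2) :
    ∃ R : ℝ, ∀ k : ℕ,
      Real.sqrt ((∑ i, ‖x k i‖ ^ 2) +
        ((∑ e ∈ E1, ‖u1 k e‖ ^ 2) + ∑ e ∈ E2, ‖u2 k e‖ ^ 2)) ≤ R := by
  classical
  obtain ⟨hu10, hu20, hstep, hupd1, hupd2⟩ := hAM
  set G := objG n N m E1 E2 a d1 d2 with hGdef
  -- the auxiliary variables stay in the unit ball
  have hu1 : ∀ k, ∀ e ∈ E1, ‖u1 k e‖ ≤ 1 := by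
    intro k
    induction k with
    | zero => exact hu10
    | succ k ih =>
      intro e he
      rw [hupd1 k e he]
      exact norm_invsmul_le_one _
  have hu2 : ∀ k, ∀ e ∈ E2, ‖u2 k e‖ ≤ 1 := by
    intro k
    induction k with
    | zero => exact hu20
    | succ k ih =>
      intro e he
      rw [hupd2 k e he]
      exact norm_invsmul_le_one _
  -- descent in x
  have hdesc : ∀ k, G (x (k + 1)) (u1 k) (u2 k) ≤ G (x k) (u1 k) (u2 k) := by
    intro k
    obtain ⟨z, hz0, hzlast, hzl⟩ := hstep k
    have key : ∀ l : Fin (q + 1), G (z l) (u1 k) (u2 k) ≤ G (z 0) (u1 k) (u2 k) := by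
      intro l
      induction l using Fin.induction with
      | zero => exact le_rfl
      | succ l ih =>
        exact le_trans ((hzl l).2 (z l.castSucc) (fun i _ => rfl)) ih
    rw [← hz0, ← hzlast]
    exact key _
  -- descent in u
  have hudesc : ∀ k, G (x (k + 1)) (u1 (k + 1)) (u2 (k + 1)) ≤
      G (x (k + 1)) (u1 k) (u2 k) := by
    intro k
    rw [hGdef]
    unfold objG
    refine add_le_add (Finset.sum_le_sum fun e he => ?_) (Finset.sum_le_sum fun e he => ?_)
    · rw [hupd1 k e he, inner_invsmul_self]
      have h1 := real_inner_le_norm (u1 k e) (x (k + 1) e.1 - x (k + 1) e.2)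
      have h2 := hu1 k e he
      have h3 := norm_nonneg (x (k + 1) e.1 - x (k + 1) e.2)
      have h4 := hd1 e he
      have hin := le_trans h1 (mul_le_of_le_one_left h3 h2)
      have := mul_le_mul_of_nonneg_left hin h4
      linarith
    · rw [hupd2 k e he, inner_invsmul_self]
      have h1 := real_inner_le_norm (u2 k e) (x (k + 1) e.1 - a e.2)
      have h2 := hu2 k e he
      have h3 := norm_nonneg (x (k + 1) e.1 - a e.2)
      have h4 := hd2 e he
      have hin := le_trans h1 (mul_le_of_le_one_left h3 h2)
      have := mul_le_mul_of_nonneg_left hin h4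
      linarith
  set M := G (x 0) (u1 0) (u2 0) with hMdef
  have hGM : ∀ k, G (x k) (u1 k) (u2 k) ≤ M := by
    intro k
    induction k with
    | zero => exact le_rfl
    | succ k ih => exact le_trans (hudesc k) (le_trans (hdesc k) ih)
  -- the nonsmooth objective is below G
  set Fo : (Fin N → EuclideanSpace ℝ (Fin n)) → ℝ := fun y =>
    (∑ e ∈ E1, (‖y e.1 - y e.2‖ ^ 2 - 2 * d1 e * ‖y e.1 - y e.2‖)) +
    ∑ e ∈ E2, (‖y e.1 - a e.2‖ ^ 2 - 2 * d2 e * ‖y e.1 - a e.2‖) with hFodef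
  have hFG : ∀ k, Fo (x k) ≤ M := by
    intro k
    refine le_trans ?_ (hGM k)
    rw [hGdef, hFodef]
    unfold objG
    refine add_le_add (Finset.sum_le_sum fun e he => ?_) (Finset.sum_le_sum fun e he => ?_)
    · have h1 := real_inner_le_norm (u1 k e) (x k e.1 - x k e.2)
      have h2 := hu1 k e he
      have h3 := norm_nonneg (x k e.1 - x k e.2)
      have h4 := hd1 e he
      have hin := le_trans h1 (mul_le_of_le_one_left h3 h2)
      have := mul_le_mul_of_nonneg_left hin h4
      linarith
    · have h1 := real_inner_le_norm (u2 k e) (x k e.1 - a e.2)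
      have h2 := hu2 k e he
      have h3 := norm_nonneg (x k e.1 - a e.2)
      have h4 := hd2 e he
      have hin := le_trans h1 (mul_le_of_le_one_left h3 h2)
      have := mul_le_mul_of_nonneg_left hin h4
      linarith
  set D : ℝ := (∑ e ∈ E1, (d1 e) ^ 2) + ∑ e ∈ E2, (d2 e) ^ 2 with hDdef
  set dbar : ℝ := 1 + ((∑ e ∈ E1, |d1 e|) + ∑ e ∈ E2, |d2 e|) with hdbardef
  have hdbar0 : (0 : ℝ) ≤ dbar := by
    have h1 : (0 : ℝ) ≤ ∑ e ∈ E1, |d1 e| := Finset.sum_nonneg fun e _ => abs_nonneg _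
    have h2 : (0 : ℝ) ≤ ∑ e ∈ E2, |d2 e| := Finset.sum_nonneg fun e _ => abs_nonneg _
    rw [hdbardef]; linarith
  have hdbar1 : ∀ e ∈ E1, d1 e ≤ dbar := by
    intro e he
    have h1 : |d1 e| ≤ ∑ e' ∈ E1, |d1 e'| :=
      Finset.single_le_sum (fun e' _ => abs_nonneg (d1 e')) he
    have h2 : (0 : ℝ) ≤ ∑ e ∈ E2, |d2 e| := Finset.sum_nonneg fun e _ => abs_nonneg _
    have h3 := le_abs_self (d1 e)
    rw [hdbardef]; linarith
  have hdbar2 : ∀ e ∈ E2, d2 e ≤ dbar := by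
    intro e he
    have h1 : |d2 e| ≤ ∑ e' ∈ E2, |d2 e'| :=
      Finset.single_le_sum (fun e' _ => abs_nonneg (d2 e')) he
    have h2 : (0 : ℝ) ≤ ∑ e ∈ E1, |d1 e| := Finset.sum_nonneg fun e _ => abs_nonneg _
    have h3 := le_abs_self (d2 e)
    rw [hdbardef]; linarith
  set L : ℝ := dbar + Real.sqrt (M + D + dbar ^ 2) with hLdef
  have hL0 : (0 : ℝ) ≤ L := by
    have := Real.sqrt_nonneg (M + D + dbar ^ 2)
    rw [hLdef]; linarith
  -- per-edge bound: every measured edge has bounded length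
  have hnormL : ∀ (v : ℝ) (dd : ℝ), 0 ≤ v → 0 ≤ dd → dd ≤ dbar →
      v ^ 2 - 2 * dd * v ≤ M + D → v ≤ L := by
    intro v dd hv hdd hddbar ht
    rcases le_or_gt v dbar with h | h
    · have := Real.sqrt_nonneg (M + D + dbar ^ 2)
      rw [hLdef]; linarith
    · have hsq : (v - dbar) ^ 2 ≤ M + D + dbar ^ 2 := by nlinarith
      have h1 : v - dbar ≤ Real.sqrt (M + D + dbar ^ 2) := by
        calc v - dbar ≤ |v - dbar| := le_abs_self _
          _ = Real.sqrt ((v - dbar) ^ 2) := (Real.sqrt_sq_eq_abs _).symm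
          _ ≤ Real.sqrt (M + D + dbar ^ 2) := Real.sqrt_le_sqrt hsq
      rw [hLdef]; linarith
  have htermM : ∀ (y : Fin N → EuclideanSpace ℝ (Fin n)), Fo y ≤ M →
      (∀ e ∈ E1, ‖y e.1 - y e.2‖ ^ 2 - 2 * d1 e * ‖y e.1 - y e.2‖ ≤ M + D) ∧
      (∀ e ∈ E2, ‖y e.1 - a e.2‖ ^ 2 - 2 * d2 e * ‖y e.1 - a e.2‖ ≤ M + D) := by
    intro y hy
    have hsum1 : ∑ e ∈ E1, ((‖y e.1 - y e.2‖ ^ 2 - 2 * d1 e * ‖y e.1 - y e.2‖) + (d1 e) ^ 2)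
        = (∑ e ∈ E1, (‖y e.1 - y e.2‖ ^ 2 - 2 * d1 e * ‖y e.1 - y e.2‖)) + ∑ e ∈ E1, (d1 e) ^ 2 :=
      Finset.sum_add_distrib
    have hsum2 : ∑ e ∈ E2, ((‖y e.1 - a e.2‖ ^ 2 - 2 * d2 e * ‖y e.1 - a e.2‖) + (d2 e) ^ 2)
        = (∑ e ∈ E2, (‖y e.1 - a e.2‖ ^ 2 - 2 * d2 e * ‖y e.1 - a e.2‖)) + ∑ e ∈ E2, (d2 e) ^ 2 :=
      Finset.sum_add_distrib
    have hnn1 : ∀ e ∈ E1,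
        (0 : ℝ) ≤ (‖y e.1 - y e.2‖ ^ 2 - 2 * d1 e * ‖y e.1 - y e.2‖) + (d1 e) ^ 2 := by
      intro e _
      nlinarith [sq_nonneg (‖y e.1 - y e.2‖ - d1 e)]
    have hnn2 : ∀ e ∈ E2,
        (0 : ℝ) ≤ (‖y e.1 - a e.2‖ ^ 2 - 2 * d2 e * ‖y e.1 - a e.2‖) + (d2 e) ^ 2 := by
      intro e _
      nlinarith [sq_nonneg (‖y e.1 - a e.2‖ - d2 e)]
    have hS1 : (0 : ℝ) ≤ ∑ e ∈ E1, ((‖y e.1 - y e.2‖ ^ 2 - 2 * d1 e * ‖y e.1 - y e.2‖) + (d1 e) ^ 2) :=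
      Finset.sum_nonneg hnn1
    have hS2 : (0 : ℝ) ≤ ∑ e ∈ E2, ((‖y e.1 - a e.2‖ ^ 2 - 2 * d2 e * ‖y e.1 - a e.2‖) + (d2 e) ^ 2) :=
      Finset.sum_nonneg hnn2
    rw [hFodef] at hy
    simp only at hy
    constructor
    · intro e he
      have h1 : (‖y e.1 - y e.2‖ ^ 2 - 2 * d1 e * ‖y e.1 - y e.2‖) + (d1 e) ^ 2 ≤
          ∑ e' ∈ E1, ((‖y e'.1 - y e'.2‖ ^ 2 - 2 * d1 e' * ‖y e'.1 - y e'.2‖) + (d1 e') ^ 2) :=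
        Finset.single_le_sum hnn1 he
      have h2 := sq_nonneg (d1 e)
      rw [hDdef]
      linarith [hsum1, hsum2, hS2]
    · intro e he
      have h1 : (‖y e.1 - a e.2‖ ^ 2 - 2 * d2 e * ‖y e.1 - a e.2‖) + (d2 e) ^ 2 ≤
          ∑ e' ∈ E2, ((‖y e'.1 - a e'.2‖ ^ 2 - 2 * d2 e' * ‖y e'.1 - a e'.2‖) + (d2 e') ^ 2) :=
        Finset.single_le_sum hnn2 he
      have h2 := sq_nonneg (d2 e)
      rw [hDdef]
      linarith [hsum1, hsum2, hS1]
  have hedge1 : ∀ k, ∀ e ∈ E1, ‖x k e.1 - x k e.2‖ ≤ L := by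
    intro k e he
    exact hnormL _ _ (norm_nonneg _) (hd1 e he) (hdbar1 e he)
      ((htermM (x k) (hFG k)).1 e he)
  have hedge2 : ∀ k, ∀ e ∈ E2, ‖x k e.1 - a e.2‖ ≤ L := by
    intro k e he
    exact hnormL _ _ (norm_nonneg _) (hd2 e he) (hdbar2 e he)
      ((htermM (x k) (hFG k)).2 e he)
  -- the graph distance argument
  set G' := SimpleGraph.fromRel (netRel N m E1 E2) with hG'def
  set pos : ℕ → (Fin N ⊕ Fin m) → EuclideanSpace ℝ (Fin n) :=
    fun k => Sum.elim (x k) a with hposdef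
  have hadj : ∀ k p r, G'.Adj p r → ‖pos k p - pos k r‖ ≤ L := by
    intro k p r hpr
    obtain ⟨-, h | h⟩ := hpr
    · rcases p with i | i <;> rcases r with j | j
      · exact hedge1 k (i, j) h
      · exact hedge2 k (i, j) h
      · exact h.elim
      · exact h.elim
    · rw [norm_sub_rev]
      rcases p with i | i <;> rcases r with j | j
      · exact hedge1 k (j, i) h
      · exact h.elim
      · exact hedge2 k (j, i) h
      · exact h.elim
  have hwalk : ∀ k (p r : Fin N ⊕ Fin m) (w : G'.Walk p r),
      ‖pos k p - pos k r‖ ≤ (w.length : ℝ) * L := by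
    intro k p r w
    induction w with
    | nil => simp
    | @cons p' q' r' h w ih =>
      have h1 : ‖pos k p' - pos k r'‖ ≤ ‖pos k p' - pos k q'‖ + ‖pos k q' - pos k r'‖ :=
        norm_sub_le_norm_sub_add_norm_sub _ _ _
      have h2 := hadj k p' q' h
      have : ((SimpleGraph.Walk.cons h w).length : ℝ) = (w.length : ℝ) + 1 := by
        rw [SimpleGraph.Walk.length_cons]; push_cast; ring
      rw [this]
      linarith [ih]
  set j0 : Fin m := ⟨0, hm⟩ with hj0def
  set Rx : ℝ := ‖a j0‖ + (N + m) * L with hRxdef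
  have hxb : ∀ k i, ‖x k i‖ ≤ Rx := by
    intro k i
    obtain ⟨w⟩ := hconn.preconnected (Sum.inl i) (Sum.inr j0)
    have hlen : (w.toPath.val).length < Fintype.card (Fin N ⊕ Fin m) :=
      w.toPath.2.length_lt
    have hcard : Fintype.card (Fin N ⊕ Fin m) = N + m := by simp
    have h1 : ‖pos k (Sum.inl i) - pos k (Sum.inr j0)‖ ≤ ((w.toPath.val).length : ℝ) * L :=
      hwalk k (Sum.inl i) (Sum.inr j0) w.toPath.val
    simp only [hposdef, Sum.elim_inl, Sum.elim_inr] at h1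
    have h2 : ((w.toPath.val).length : ℝ) ≤ (N + m : ℝ) := by
      have : (w.toPath.val).length ≤ N + m := by omega
      exact_mod_cast this
    have h3 : ((w.toPath.val).length : ℝ) * L ≤ (N + m : ℝ) * L :=
      mul_le_mul_of_nonneg_right h2 hL0
    have h4 : ‖x k i‖ ≤ ‖x k i - a j0‖ + ‖a j0‖ := by
      calc ‖x k i‖ = ‖(x k i - a j0) + a j0‖ := by rw [sub_add_cancel]
        _ ≤ ‖x k i - a j0‖ + ‖a j0‖ := norm_add_le _ _
    rw [hRxdef]
    push_cast
    linarith
  have hRx0 : (0 : ℝ) ≤ Rx := le_trans (norm_nonneg _) (hxb 0 ⟨0, hN⟩)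
  refine ⟨Real.sqrt ((N : ℝ) * Rx ^ 2 + ((E1.card : ℝ) + (E2.card : ℝ))), fun k => ?_⟩
  apply Real.sqrt_le_sqrt
  have hx2 : ∑ i, ‖x k i‖ ^ 2 ≤ (N : ℝ) * Rx ^ 2 := by
    calc ∑ i, ‖x k i‖ ^ 2 ≤ ∑ _i : Fin N, Rx ^ 2 :=
          Finset.sum_le_sum fun i _ => pow_le_pow_left₀ (norm_nonneg _) (hxb k i) 2
      _ = (N : ℝ) * Rx ^ 2 := by
          rw [Finset.sum_const, Finset.card_univ, Fintype.card_fin, nsmul_eq_mul]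
  have hu12 : ∑ e ∈ E1, ‖u1 k e‖ ^ 2 ≤ (E1.card : ℝ) := by
    calc ∑ e ∈ E1, ‖u1 k e‖ ^ 2 ≤ ∑ _e ∈ E1, (1 : ℝ) :=
          Finset.sum_le_sum fun e he => by
            nlinarith [hu1 k e he, norm_nonneg (u1 k e)]
      _ = (E1.card : ℝ) := by rw [Finset.sum_const, nsmul_eq_mul, mul_one]
  have hu22 : ∑ e ∈ E2, ‖u2 k e‖ ^ 2 ≤ (E2.card : ℝ) := by
    calc ∑ e ∈ E2, ‖u2 k e‖ ^ 2 ≤ ∑ _e ∈ E2, (1 : ℝ) :=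
          Finset.sum_le_sum fun e he => by
            nlinarith [hu2 k e he, norm_nonneg (u2 k e)]
      _ = (E2.card : ℝ) := by rw [Finset.sum_const, nsmul_eq_mul, mul_one]
  linarith
end
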